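/- arXiv:1803.07239 — 3 statements merged into one kernel-verified Lean document; each statement's English description precedes it below -/
import Mathlib

section
/- Let H be a finite dimensional Hopf algebra and α, β Hopf automorphisms. The diagonal crossed product A ⋈ B_(α,β) = H* ⊗ H with product (p ⋈ h)(q ⋈ l) = Σ p(α(h₁) ▶ q ◀ S⁻¹β(h₃)) ⋈ h₂ l is a unital associative algebra with unit ε ⋈ 1, and the maps p ↦ p ⋈ 1 and h ↦ ε ⋈ h are injective algebra homomorphisms from H* and H respectively. -/
open TensorProduct LinearMap

noncomputable section

namespace DCP

variable (K : Type) {H : Type} [Field K] [Ring H] [HopfAlgebra K H]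

/-- A Hopf algebra automorphism: a linear equivalence that is an algebra morphism and a
coalgebra morphism. -/
def IsHopfAut (f : H ≃ₗ[K] H) : Prop :=
  (∀ x y : H, f (x * y) = f x * f y) ∧ f 1 = 1 ∧
    (Coalgebra.comul ∘ₗ f.toLinearMap
      = TensorProduct.map f.toLinearMap f.toLinearMap ∘ₗ Coalgebra.comul) ∧
    (Coalgebra.counit ∘ₗ f.toLinearMap = (Coalgebra.counit : H →ₗ[K] K))

/-- The convolution product on the dual of `H`, as a bilinear map. -/
def convMul : Module.Dual K H →ₗ[K] Module.Dual K H →ₗ[K] Module.Dual K H :=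
  (TensorProduct.mapBilinear (RingHom.id K) H H K K).compr₂
    ((LinearMap.lcomp K K (Coalgebra.comul (R := K) (A := H))) ∘ₗ
      (LinearMap.llcomp K (H ⊗[K] H) (K ⊗[K] K) K (TensorProduct.lid K K).toLinearMap))

@[simp] lemma convMul_apply (p q : Module.Dual K H) (x : H) :
    convMul K p q x = (TensorProduct.lid K K).toLinearMap
      (TensorProduct.map p q (Coalgebra.comul x)) := rfl

/-- The coproduct on the dual of a finite-dimensional Hopf algebra, dual to multiplication. -/
def dcomul [FiniteDimensional K H] :
    Module.Dual K H →ₗ[K] Module.Dual K H ⊗[K] Module.Dual K H :=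
  (TensorProduct.dualDistribEquiv K H H).symm.toLinearMap ∘ₗ (LinearMap.mul' K H).dualMap

/-- The iterated comultiplication `h ↦ h₁ ⊗ (h₂ ⊗ h₃)`. -/
def comul2 : H →ₗ[K] H ⊗[K] (H ⊗[K] H) :=
  (LinearMap.lTensor H (Coalgebra.comul (R := K))) ∘ₗ Coalgebra.comul

/-- Lift a trilinear map to the triple tensor product `H ⊗ (H ⊗ H)`. -/
def lift3 {W : Type} [AddCommMonoid W] [Module K W]
    (Φ : H →ₗ[K] H →ₗ[K] H →ₗ[K] W) : H ⊗[K] (H ⊗[K] H) →ₗ[K] W :=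
  TensorProduct.lift ((TensorProduct.lift.equiv (RingHom.id K) H H W).toLinearMap ∘ₗ Φ)

variable {K}

/-- auxiliary linear map `h₃ ↦ F (p ∘ mulLeft (u h₃) ∘ mulRight (v h₁)) ⊗ g h₂`. -/
def inner3 (u : H →ₗ[K] H) (F : Module.Dual K H →ₗ[K] Module.Dual K H)
    (p : Module.Dual K H) (a g2 : H) : H →ₗ[K] Module.Dual K H ⊗[K] H :=
  ((TensorProduct.mk K (Module.Dual K H) H).flip g2) ∘ₗ F ∘ₗ
    (LinearMap.llcomp K H H K p) ∘ₗ
    ((LinearMap.llcomp K H H H).flip (LinearMap.mulRight K a)) ∘ₗ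
    ((LinearMap.mul K H) ∘ₗ u)

@[simp] lemma inner3_apply (u : H →ₗ[K] H) (F : Module.Dual K H →ₗ[K] Module.Dual K H)
    (p : Module.Dual K H) (a g2 h₃ : H) :
    inner3 u F p a g2 h₃
      = F (p ∘ₗ LinearMap.mulLeft K (u h₃) ∘ₗ LinearMap.mulRight K a) ⊗ₜ[K] g2 := by
  rfl

variable (K)

/-- The curried trilinear map
`(h₁, h₂, h₃) ↦ F (p ∘ mulLeft (u h₃) ∘ mulRight (v h₁)) ⊗ g h₂`. -/
def coreTri (u v : H →ₗ[K] H) (F : Module.Dual K H →ₗ[K] Module.Dual K H)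
    (g : H →ₗ[K] H) (p : Module.Dual K H) :
    H →ₗ[K] H →ₗ[K] H →ₗ[K] Module.Dual K H ⊗[K] H :=
  LinearMap.mk₂ K (fun h₁ h₂ => inner3 u F p (v h₁) (g h₂))
    (fun m m' n => by
      have hR : ∀ a b : H, LinearMap.mulRight K (a + b)
          = LinearMap.mulRight K a + LinearMap.mulRight K b := by
        intro a b; ext x; simp [mul_add]
      ext h₃
      simp [hR, LinearMap.comp_add, LinearMap.add_comp, map_add, add_tmul])
    (fun c m n => by
      have hR : ∀ a : H, LinearMap.mulRight K ((c : K) • a)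
          = c • LinearMap.mulRight K a := by
        intro a; ext x; simp [mul_smul_comm]
      ext h₃
      simp [hR, LinearMap.comp_smul, LinearMap.smul_comp, map_smul, smul_tmul'])
    (fun m n n' => by
      ext h₃
      simp [map_add, tmul_add])
    (fun c m n => by
      ext h₃
      simp [map_smul, tmul_smul])

/-- The diagonal crossed product of pure tensors:
`(p ⋈ h)(q ⋈ l) = Σ p (α(h₁) ▶ q ◀ S⁻¹β(h₃)) ⋈ h₂ l`. -/
def dprod (α β Sinv : H →ₗ[K] H) (p : Module.Dual K H) (h : H)
    (q : Module.Dual K H) (l : H) : Module.Dual K H ⊗[K] H :=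
  lift3 K (coreTri K (Sinv ∘ₗ β) α (convMul K p) (LinearMap.mulRight K l) q) (comul2 K h)

/-- The value of the antipode of the diagonal crossed product on a pure tensor. -/
def smapVal (α β Sinv : H →ₗ[K] H) (p : Module.Dual K H) (h : H) :
    Module.Dual K H ⊗[K] H :=
  lift3 K (coreTri K (Sinv ∘ₗ β ∘ₗ HopfAlgebra.antipode (R := K))
      (Sinv ∘ₗ α) Sinv.dualMap
      (α ∘ₗ β ∘ₗ HopfAlgebra.antipode (R := K)) p) (comul2 K h)

/-- Componentwise product on a tensor product of two (nonunital) algebras given by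
bilinear multiplications. -/
def tmul₂ {A B : Type} [AddCommMonoid A] [Module K A] [AddCommMonoid B] [Module K B]
    (M1 : A →ₗ[K] A →ₗ[K] A) (M2 : B →ₗ[K] B →ₗ[K] B) :
    A ⊗[K] B →ₗ[K] A ⊗[K] B →ₗ[K] A ⊗[K] B :=
  (TensorProduct.homTensorHomMap (RingHom.id K) A B A B) ∘ₗ (TensorProduct.map M1 M2)

/-- The comultiplication component `Δ_{(α,β),(γ,δ)}(p ⋈ h) = Σ (p₂ ⋈ c h₁) ⊗ (p₁ ⋈ e h₂)`
(with `c = γ`, `e = γ⁻¹βγ`). -/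
def deltaComp [FiniteDimensional K H] (c e : H →ₗ[K] H) :
    Module.Dual K H ⊗[K] H →ₗ[K]
      (Module.Dual K H ⊗[K] H) ⊗[K] (Module.Dual K H ⊗[K] H) :=
  (TensorProduct.tensorTensorTensorComm K (Module.Dual K H) (Module.Dual K H) H H).toLinearMap ∘ₗ
    TensorProduct.map
      ((TensorProduct.comm K (Module.Dual K H) (Module.Dual K H)).toLinearMap ∘ₗ dcomul K)
      (TensorProduct.map c e ∘ₗ Coalgebra.comul)

/-- The crossing map `ξ_(a,b)^(c,·)(p ⋈ h) = (p ∘ b a⁻¹) ⋈ a c⁻¹ b⁻¹ c (h)`. -/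
def xiMap (a b c : H ≃ₗ[K] H) :
    Module.Dual K H ⊗[K] H →ₗ[K] Module.Dual K H ⊗[K] H :=
  TensorProduct.map ((b.toLinearMap ∘ₗ a.symm.toLinearMap).dualMap)
    (a.toLinearMap ∘ₗ c.symm.toLinearMap ∘ₗ b.symm.toLinearMap ∘ₗ c.toLinearMap)

/-- Embedding of the dual into the crossed product, `p ↦ p ⋈ 1`. -/
def toD1 : Module.Dual K H →ₗ[K] Module.Dual K H ⊗[K] H :=
  (TensorProduct.mk K (Module.Dual K H) H).flip 1

/-- Embedding of `H` into the crossed product, `h ↦ ε ⋈ h`. -/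
def toD2 : H →ₗ[K] Module.Dual K H ⊗[K] H :=
  TensorProduct.mk K (Module.Dual K H) H (Coalgebra.counit (R := K))

end DCP
namespace DCPAux
open Coalgebra TensorProduct LinearMap

variable {K H : Type} [Field K] [Ring H] [HopfAlgebra K H]
variable {ι ι' κ κ' : Type*}

lemma counit_smul_sum {x : H} (r : Repr K x ι) :
    ∑ i ∈ r.index, Coalgebra.counit (R := K) (r.left i) • r.right i = x := by
  have h := congrArg (TensorProduct.lid K H) (Coalgebra.sum_counit_tmul_eq r)
  rw [map_sum] at h
  simp only [TensorProduct.lid_tmul, one_smul] at h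
  exact h

lemma smul_counit_sum {x : H} (r : Repr K x ι) :
    ∑ i ∈ r.index, Coalgebra.counit (R := K) (r.right i) • r.left i = x := by
  have h := congrArg (TensorProduct.rid K H) (Coalgebra.sum_tmul_counit_eq r)
  rw [map_sum] at h
  simp only [TensorProduct.rid_tmul, one_smul] at h
  exact h

/-- product of two representations -/
def reprMul {x y : H} (rx : Repr K x ι) (ry : Repr K y ι') : Repr K (x * y) (ι × ι') where
  index := rx.index ×ˢ ry.index
  left := fun i => rx.left i.1 * ry.left i.2
  right := fun i => rx.right i.1 * ry.right i.2
  eq := by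
    rw [Finset.sum_product]
    simp_rw [← Algebra.TensorProduct.tmul_mul_tmul]
    rw [← Finset.sum_mul_sum, rx.eq, ry.eq]
    exact (Bialgebra.comul_mul x y).symm

/-- representation of 1 -/
def reprOne : Repr K (1 : H) (Fin 1) where
  index := ({0} : Finset (Fin 1))
  left := fun _ => 1
  right := fun _ => 1
  eq := by
    rw [Finset.sum_singleton, Bialgebra.comul_one, Algebra.TensorProduct.one_def]

/-- representation through a coalgebra morphism -/
def reprMap (f : H →ₗ[K] H)
    (hf : ∀ z : H, Coalgebra.comul (R := K) (f z)
      = TensorProduct.map f f (Coalgebra.comul z)) {x : H} (r : Repr K x ι) :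
    Repr K (f x) ι where
  index := r.index
  left := fun i => f (r.left i)
  right := fun i => f (r.right i)
  eq := by rw [hf, ← r.eq, map_sum]; simp

/-- representation through an anti-coalgebra morphism -/
def reprAnti (f : H →ₗ[K] H)
    (hf : ∀ z : H, Coalgebra.comul (R := K) (f z)
      = TensorProduct.map f f (TensorProduct.comm K H H (Coalgebra.comul z))) {x : H}
    (r : Repr K x ι) : Repr K (f x) ι where
  index := r.index
  left := fun i => f (r.right i)
  right := fun i => f (r.left i)
  eq := by rw [hf, ← r.eq, map_sum, map_sum]; simp

lemma convMul_repr (p q : Module.Dual K H) {x : H} (r : Repr K x ι) :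
    DCP.convMul K p q x = ∑ i ∈ r.index, p (r.left i) * q (r.right i) := by
  rw [DCP.convMul_apply, ← r.eq, map_sum, map_sum]
  simp [smul_eq_mul]

lemma convMul_counit_left (q : Module.Dual K H) :
    DCP.convMul K (Coalgebra.counit (R := K)) q = q := by
  ext x
  rw [convMul_repr _ _ (ℛ K x)]
  simp_rw [← smul_eq_mul, ← map_smul, ← map_sum]
  rw [counit_smul_sum]

lemma convMul_counit_right (p : Module.Dual K H) :
    DCP.convMul K p (Coalgebra.counit (R := K)) = p := by
  ext x
  rw [convMul_repr _ _ (ℛ K x)]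
  have h : ∀ i ∈ (ℛ K x).index,
      p ((ℛ K x).left i) * Coalgebra.counit (R := K) ((ℛ K x).right i)
        = p (Coalgebra.counit (R := K) ((ℛ K x).right i) • (ℛ K x).left i) := by
    intro i _; rw [map_smul, smul_eq_mul, mul_comm]
  rw [Finset.sum_congr rfl h, ← map_sum, smul_counit_sum]

lemma counit_antipode (x : H) :
    Coalgebra.counit (R := K) (HopfAlgebra.antipode (R := K) x)
      = Coalgebra.counit (R := K) x := by
  set r := ℛ K x with hr
  have h1 : x = ∑ i ∈ r.index, Coalgebra.counit (R := K) (r.right i) • r.left i :=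
    (smul_counit_sum r).symm
  conv_lhs => rw [h1, map_sum, map_sum]
  simp only [map_smul, smul_eq_mul]
  have h3 : ∀ i ∈ r.index,
      Coalgebra.counit (R := K) (r.right i)
          * Coalgebra.counit (R := K) (HopfAlgebra.antipode (R := K) (r.left i))
        = Coalgebra.counit (R := K)
            (HopfAlgebra.antipode (R := K) (r.left i) * r.right i) := by
    intro i _
    rw [Bialgebra.counit_mul]; ring
  rw [Finset.sum_congr rfl h3, ← map_sum, HopfAlgebra.sum_antipode_mul_eq_smul]
  simp

lemma antipode_one : HopfAlgebra.antipode (R := K) (1 : H) = 1 := by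
  have := HopfAlgebra.sum_antipode_mul_eq_smul (R := K) (reprOne (K := K) (H := H))
  simpa [reprOne] using this

end DCPAux
namespace DCPAux
open Coalgebra TensorProduct LinearMap

variable {K H : Type} [Field K] [Ring H] [HopfAlgebra K H]
variable {ι ι' κ κ' : Type*}

lemma lift3_tmul {W : Type} [AddCommMonoid W] [Module K W]
    (Φ : H →ₗ[K] H →ₗ[K] H →ₗ[K] W) (a b c : H) :
    DCP.lift3 K Φ (a ⊗ₜ[K] (b ⊗ₜ[K] c)) = Φ a b c := rfl

lemma comul2_repr {h : H} (r : Repr K h ι) (ρ : ∀ i, Repr K (r.right i) κ) :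
    DCP.comul2 K h = ∑ i ∈ r.index, ∑ j ∈ (ρ i).index,
      r.left i ⊗ₜ[K] ((ρ i).left j ⊗ₜ[K] (ρ i).right j) := by
  show (LinearMap.lTensor H (Coalgebra.comul (R := K))) (Coalgebra.comul h) = _
  rw [← r.eq, map_sum]
  refine Finset.sum_congr rfl fun i _ => ?_
  rw [lTensor_tmul, ← (ρ i).eq, tmul_sum]

lemma comul2_left {h : H} (r : Repr K h ι) (ρ : ∀ i, Repr K (r.left i) κ)
    (ρ' : ∀ i, Repr K (r.right i) κ') :
    ∑ i ∈ r.index, ∑ j ∈ (ρ i).index,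
      (ρ i).left j ⊗ₜ[K] ((ρ i).right j ⊗ₜ[K] r.right i)
      = DCP.comul2 K h := by
  rw [comul2_repr r ρ']
  exact Coalgebra.sum_tmul_tmul_eq r ρ ρ'

lemma dprod_repr (αl βl Sinv : H →ₗ[K] H) (p q : Module.Dual K H) (h l : H)
    (r : Repr K h ι) (ρ : ∀ i, Repr K (r.right i) κ) :
    DCP.dprod K αl βl Sinv p h q l = ∑ i ∈ r.index, ∑ j ∈ (ρ i).index,
      DCP.convMul K p
        (q ∘ₗ LinearMap.mulLeft K (Sinv (βl ((ρ i).right j)))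
           ∘ₗ LinearMap.mulRight K (αl (r.left i)))
        ⊗ₜ[K] ((ρ i).left j * l) := by
  unfold DCP.dprod
  rw [comul2_repr r ρ, map_sum]
  refine Finset.sum_congr rfl fun i _ => ?_
  rw [map_sum]
  refine Finset.sum_congr rfl fun j _ => ?_
  rfl

end DCPAux
namespace DCPAux
open Coalgebra TensorProduct LinearMap

variable {K H : Type} [Field K] [Ring H] [HopfAlgebra K H]
variable {ι ι' κ κ' : Type*}

/-- generic collapse: `∑ g (left * S right) = ε y • g 1` -/
lemma collapse_mul_antipode {W : Type} [AddCommMonoid W] [Module K W]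
    {y : H} (r : Repr K y ι) (g : H →ₗ[K] W) :
    ∑ v ∈ r.index, g (r.left v * HopfAlgebra.antipode (R := K) (r.right v))
      = Coalgebra.counit (R := K) y • g 1 := by
  rw [← map_sum, HopfAlgebra.sum_mul_antipode_eq_smul, map_smul]

lemma collapse_antipode_mul {W : Type} [AddCommMonoid W] [Module K W]
    {y : H} (r : Repr K y ι) (g : H →ₗ[K] W) :
    ∑ v ∈ r.index, g (HopfAlgebra.antipode (R := K) (r.left v) * r.right v)
      = Coalgebra.counit (R := K) y • g 1 := by
  rw [← map_sum, HopfAlgebra.sum_antipode_mul_eq_smul, map_smul]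

lemma collapse_counit_right {W : Type} [AddCommMonoid W] [Module K W]
    {y : H} (r : Repr K y ι) (g : H →ₗ[K] W) :
    ∑ u ∈ r.index, Coalgebra.counit (R := K) (r.right u) • g (r.left u) = g y := by
  simp_rw [← map_smul]
  rw [← map_sum, smul_counit_sum]

lemma collapse_counit_left {W : Type} [AddCommMonoid W] [Module K W]
    {y : H} (r : Repr K y ι) (g : H →ₗ[K] W) :
    ∑ u ∈ r.index, Coalgebra.counit (R := K) (r.left u) • g (r.right u) = g y := by
  simp_rw [← map_smul]
  rw [← map_sum, counit_smul_sum]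

/-- `a₃ ⊗ b₃ ↦ S b₃ * S a₃`. -/
noncomputable def nuS : H ⊗[K] H →ₗ[K] H :=
  LinearMap.mul' K H
    ∘ₗ TensorProduct.map (HopfAlgebra.antipode (R := K)) (HopfAlgebra.antipode (R := K))
    ∘ₗ (TensorProduct.comm K H H).toLinearMap

/-- The functional used to prove anti-multiplicativity of the antipode. -/
noncomputable def PsiS : (H ⊗[K] (H ⊗[K] H)) ⊗[K] (H ⊗[K] (H ⊗[K] H)) →ₗ[K] H :=
  LinearMap.mul' K H
    ∘ₗ TensorProduct.map (HopfAlgebra.antipode (R := K)) (LinearMap.mul' K H)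
    ∘ₗ TensorProduct.map (LinearMap.mul' K H)
        (TensorProduct.map (LinearMap.mul' K H) nuS)
    ∘ₗ LinearMap.lTensor (H ⊗[K] H)
        (TensorProduct.tensorTensorTensorComm K H H H H).toLinearMap
    ∘ₗ (TensorProduct.tensorTensorTensorComm K H (H ⊗[K] H) H (H ⊗[K] H)).toLinearMap

lemma PsiS_tmul (a1 a2 a3 b1 b2 b3 : H) :
    PsiS ((a1 ⊗ₜ[K] (a2 ⊗ₜ[K] a3)) ⊗ₜ[K] (b1 ⊗ₜ[K] (b2 ⊗ₜ[K] b3)))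
      = HopfAlgebra.antipode (R := K) (a1 * b1)
          * ((a2 * b2) * (HopfAlgebra.antipode (R := K) b3
              * HopfAlgebra.antipode (R := K) a3)) := by
  simp [PsiS, nuS]

lemma mini1 {y : H} (r : Repr K y ι) (c d e : H) :
    ∑ v ∈ r.index,
      c * ((d * r.left v) * (HopfAlgebra.antipode (R := K) (r.right v) * e))
      = Coalgebra.counit (R := K) y • (c * (d * e)) := by
  have e1 : ∀ v ∈ r.index,
      c * ((d * r.left v) * (HopfAlgebra.antipode (R := K) (r.right v) * e))
        = (LinearMap.mulLeft K c ∘ₗ LinearMap.mulLeft K d ∘ₗ LinearMap.mulRight K e)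
            (r.left v * HopfAlgebra.antipode (R := K) (r.right v)) := by
    intro v _
    simp only [LinearMap.comp_apply, LinearMap.mulLeft_apply, LinearMap.mulRight_apply,
      mul_assoc]
  rw [Finset.sum_congr rfl e1, collapse_mul_antipode]
  simp [mul_assoc]

lemma mini2 {y : H} (r : Repr K y ι) (c d : H) :
    ∑ u ∈ r.index, Coalgebra.counit (R := K) (r.right u)
        • (HopfAlgebra.antipode (R := K) (c * r.left u) * d)
      = HopfAlgebra.antipode (R := K) (c * y) * d := by
  have := collapse_counit_right r
    (LinearMap.mulRight K d ∘ₗ HopfAlgebra.antipode (R := K) ∘ₗ LinearMap.mulLeft K c)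
  simpa using this

lemma mini3 {y : H} (r : Repr K y ι) (c : H) :
    ∑ j ∈ r.index, c * (r.left j * HopfAlgebra.antipode (R := K) (r.right j))
      = Coalgebra.counit (R := K) y • c := by
  have := collapse_mul_antipode r (LinearMap.mulLeft K c)
  simpa using this

lemma mini4 {y : H} (r : Repr K y ι) (b : H) :
    ∑ i ∈ r.index, Coalgebra.counit (R := K) (r.right i)
        • HopfAlgebra.antipode (R := K) (r.left i * b)
      = HopfAlgebra.antipode (R := K) (y * b) := by
  have := collapse_counit_right r
    ((HopfAlgebra.antipode (R := K) : H →ₗ[K] H) ∘ₗ LinearMap.mulRight K b)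
  simpa using this

lemma mini5 {y : H} (r : Repr K y ι) (c : H) :
    ∑ j ∈ r.index, HopfAlgebra.antipode (R := K) (r.left j) * (r.right j * c)
      = Coalgebra.counit (R := K) y • c := by
  have e1 : ∀ j ∈ r.index,
      HopfAlgebra.antipode (R := K) (r.left j) * (r.right j * c)
        = (LinearMap.mulRight K c) (HopfAlgebra.antipode (R := K) (r.left j) * r.right j) := by
    intro j _
    simp [mul_assoc]
  rw [Finset.sum_congr rfl e1, collapse_antipode_mul]
  simp

lemma mini6 {y : H} (r : Repr K y ι) (c : H) :
    ∑ u ∈ r.index, Coalgebra.counit (R := K) (r.left u)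
        • (HopfAlgebra.antipode (R := K) (r.right u) * c)
      = HopfAlgebra.antipode (R := K) y * c := by
  have := collapse_counit_left r
    (LinearMap.mulRight K c ∘ₗ (HopfAlgebra.antipode (R := K) : H →ₗ[K] H))
  simpa using this

lemma mini7 {y : H} (r : Repr K y ι) (c : H) :
    ∑ i ∈ r.index, Coalgebra.counit (R := K) (r.left i)
        • (c * HopfAlgebra.antipode (R := K) (r.right i))
      = c * HopfAlgebra.antipode (R := K) y := by
  have := collapse_counit_left r
    (LinearMap.mulLeft K c ∘ₗ (HopfAlgebra.antipode (R := K) : H →ₗ[K] H))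
  simpa using this

lemma inner1 {w z : H} (rw : Repr K w ι) (rz : Repr K z ι') (c : H) :
    ∑ v ∈ rw.index, ∑ j ∈ rz.index,
      c * ((rz.left j * rw.left v)
        * (HopfAlgebra.antipode (R := K) (rw.right v)
            * HopfAlgebra.antipode (R := K) (rz.right j)))
      = Coalgebra.counit (R := K) w • (Coalgebra.counit (R := K) z • c) := by
  rw [Finset.sum_comm]
  have e1 : ∀ j ∈ rz.index,
      ∑ v ∈ rw.index, c * ((rz.left j * rw.left v)
        * (HopfAlgebra.antipode (R := K) (rw.right v)
            * HopfAlgebra.antipode (R := K) (rz.right j)))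
      = Coalgebra.counit (R := K) w
          • (c * (rz.left j * HopfAlgebra.antipode (R := K) (rz.right j))) :=
    fun j _ => mini1 rw c (rz.left j) (HopfAlgebra.antipode (R := K) (rz.right j))
  rw [Finset.sum_congr rfl e1, ← Finset.smul_sum, mini3 rz c]

lemma inner2 {b' : H} (rb : Repr K b' ι) (c : K) (aa : H) :
    ∑ u ∈ rb.index, Coalgebra.counit (R := K) (rb.right u)
        • (c • HopfAlgebra.antipode (R := K) (aa * rb.left u))
      = c • HopfAlgebra.antipode (R := K) (aa * b') := by
  have e1 : ∀ u ∈ rb.index,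
      Coalgebra.counit (R := K) (rb.right u)
          • (c • HopfAlgebra.antipode (R := K) (aa * rb.left u))
        = c • (Coalgebra.counit (R := K) (rb.right u)
            • HopfAlgebra.antipode (R := K) (aa * rb.left u)) :=
    fun u _ => smul_comm _ _ _
  rw [Finset.sum_congr rfl e1, ← Finset.smul_sum]
  congr 1
  have := collapse_counit_right rb
    ((HopfAlgebra.antipode (R := K) : H →ₗ[K] H) ∘ₗ LinearMap.mulLeft K aa)
  simpa using this

lemma inner3 {z w : H} (rz : Repr K z ι) (rw : Repr K w ι') (c : H) :
    ∑ v ∈ rw.index, ∑ j ∈ rz.index,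
      HopfAlgebra.antipode (R := K) (rz.left j * rw.left v)
        * ((rz.right j * rw.right v) * c)
      = Coalgebra.counit (R := K) z • (Coalgebra.counit (R := K) w • c) := by
  rw [Finset.sum_comm, ← Finset.sum_product']
  have := mini5 (reprMul rz rw) c
  simpa [reprMul, Bialgebra.counit_mul, mul_smul] using this

lemma inner4 {b' : H} (rb : Repr K b' ι) (c : K) (d : H) :
    ∑ u ∈ rb.index, c • (Coalgebra.counit (R := K) (rb.left u)
        • (HopfAlgebra.antipode (R := K) (rb.right u) * d))
      = c • (HopfAlgebra.antipode (R := K) b' * d) := by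
  rw [← Finset.smul_sum, mini6 rb d]

theorem antipode_mul (a b : H) :
    HopfAlgebra.antipode (R := K) (a * b)
      = HopfAlgebra.antipode (R := K) b * HopfAlgebra.antipode (R := K) a := by
  have key1 : PsiS (K := K) (DCP.comul2 K a ⊗ₜ[K] DCP.comul2 K b)
      = HopfAlgebra.antipode (R := K) (a * b) := by
    rw [comul2_repr (ℛ K a) (fun i => ℛ K ((ℛ K a).right i)),
        comul2_repr (ℛ K b) (fun u => ℛ K ((ℛ K b).right u))]
    rw [sum_tmul]
    simp only [tmul_sum, sum_tmul, map_sum, PsiS_tmul]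
    simp only [inner1, inner2]
    exact mini4 (ℛ K a) b
  have key2 : PsiS (K := K) (DCP.comul2 K a ⊗ₜ[K] DCP.comul2 K b)
      = HopfAlgebra.antipode (R := K) b * HopfAlgebra.antipode (R := K) a := by
    rw [← comul2_left (ℛ K a) (fun i => ℛ K ((ℛ K a).left i)) (fun i => ℛ K ((ℛ K a).right i)),
        ← comul2_left (ℛ K b) (fun u => ℛ K ((ℛ K b).left u)) (fun u => ℛ K ((ℛ K b).right u))]
    rw [sum_tmul]
    simp only [tmul_sum, sum_tmul, map_sum, PsiS_tmul]
    simp only [inner3, inner4]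
    exact mini7 (ℛ K a) _
  rw [← key1, key2]

end DCPAux
namespace DCPAux
open Coalgebra TensorProduct LinearMap

variable {K H : Type} [Field K] [Ring H] [HopfAlgebra K H]
variable {ι ι' κ κ' : Type*}

/-- `G y = Σ S y₂ ⊗ S y₁`. -/
noncomputable def antiG : H →ₗ[K] H ⊗[K] H :=
  TensorProduct.map (HopfAlgebra.antipode (R := K)) (HopfAlgebra.antipode (R := K))
    ∘ₗ (TensorProduct.comm K H H).toLinearMap ∘ₗ Coalgebra.comul

lemma antiG_repr {y : H} (r : Repr K y ι) :
    antiG (K := K) y = ∑ m ∈ r.index,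
      HopfAlgebra.antipode (R := K) (r.right m) ⊗ₜ[K]
        HopfAlgebra.antipode (R := K) (r.left m) := by
  show (TensorProduct.map _ _) ((TensorProduct.comm K H H) (Coalgebra.comul y)) = _
  rw [← r.eq, map_sum, map_sum]
  simp

/-- `Θ (c1 ⊗ (c2 ⊗ (c3 ⊗ c4))) = (c1 * S c4) ⊗ (c2 * S c3)`. -/
noncomputable def ThetaS : H ⊗[K] (H ⊗[K] (H ⊗[K] H)) →ₗ[K] H ⊗[K] H :=
  TensorProduct.map
      (LinearMap.mul' K H ∘ₗ LinearMap.lTensor H (HopfAlgebra.antipode (R := K)))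
      (LinearMap.mul' K H ∘ₗ LinearMap.lTensor H (HopfAlgebra.antipode (R := K)))
    ∘ₗ (TensorProduct.assoc K H H (H ⊗[K] H)).symm.toLinearMap
    ∘ₗ LinearMap.lTensor H (TensorProduct.comm K (H ⊗[K] H) H).toLinearMap
    ∘ₗ LinearMap.lTensor H (TensorProduct.assoc K H H H).symm.toLinearMap

lemma ThetaS_tmul (c1 c2 c3 c4 : H) :
    ThetaS (c1 ⊗ₜ[K] (c2 ⊗ₜ[K] (c3 ⊗ₜ[K] c4)))
      = (c1 * HopfAlgebra.antipode (R := K) c4) ⊗ₜ[K]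
          (c2 * HopfAlgebra.antipode (R := K) c3) := by
  simp [ThetaS]

lemma ThetaS_expand (a b c : H) :
    ThetaS (a ⊗ₜ[K] (b ⊗ₜ[K] Coalgebra.comul (R := K) c))
      = ∑ m ∈ (ℛ K c).index,
          (a * HopfAlgebra.antipode (R := K) ((ℛ K c).right m)) ⊗ₜ[K]
            (b * HopfAlgebra.antipode (R := K) ((ℛ K c).left m)) := by
  rw [← (ℛ K c).eq, tmul_sum, tmul_sum, map_sum]
  simp only [ThetaS_tmul]

lemma prod_expand (u v : H) :
    Coalgebra.comul (R := K) u * antiG (K := K) v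
      = ∑ k ∈ (ℛ K u).index, ∑ m ∈ (ℛ K v).index,
          ((ℛ K u).left k * HopfAlgebra.antipode (R := K) ((ℛ K v).right m)) ⊗ₜ[K]
            ((ℛ K u).right k * HopfAlgebra.antipode (R := K) ((ℛ K v).left m)) := by
  rw [← (ℛ K u).eq, antiG_repr (ℛ K v), Finset.sum_mul_sum]
  simp [Algebra.TensorProduct.tmul_mul_tmul]

lemma innerE {mid : H} (rm : Repr K mid ι) (A : H) :
    ∑ k ∈ rm.index,
      A ⊗ₜ[K] (rm.left k * HopfAlgebra.antipode (R := K) (rm.right k))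
      = Coalgebra.counit (R := K) mid • (A ⊗ₜ[K] (1 : H)) := by
  exact collapse_mul_antipode rm (TensorProduct.mk K H H A)

lemma innerF {z : H} (rz : Repr K z ι) (a : H) :
    ∑ m ∈ rz.index, Coalgebra.counit (R := K) (rz.left m)
        • ((a * HopfAlgebra.antipode (R := K) (rz.right m)) ⊗ₜ[K] (1 : H))
      = (a * HopfAlgebra.antipode (R := K) z) ⊗ₜ[K] (1 : H) := by
  have := collapse_counit_left rz
    (((TensorProduct.mk K H H).flip 1) ∘ₗ LinearMap.mulLeft K a
      ∘ₗ (HopfAlgebra.antipode (R := K) : H →ₗ[K] H))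
  simpa using this

lemma conv_cancel {y : H} (r : Repr K y ι) :
    ∑ j ∈ r.index, Coalgebra.comul (R := K) (r.left j) * antiG (K := K) (r.right j)
      = Coalgebra.counit (R := K) y • (1 : H ⊗[K] H) := by
  have base := Coalgebra.sum_tmul_tmul_eq r
    (fun j => ℛ K (r.left j)) (fun j => ℛ K (r.right j))
  have base2 := congrArg (fun t => ThetaS (K := K)
    ((LinearMap.lTensor H (LinearMap.lTensor H (Coalgebra.comul (R := K)))) t)) base
  simp only [map_sum, lTensor_tmul, ThetaS_expand] at base2
  -- identify LHS of the goal with LHS of base2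
  have lhs_eq : ∑ j ∈ r.index,
      Coalgebra.comul (R := K) (r.left j) * antiG (K := K) (r.right j)
      = ∑ j ∈ r.index, ∑ k ∈ (ℛ K (r.left j)).index, ∑ m ∈ (ℛ K (r.right j)).index,
          ((ℛ K (r.left j)).left k
              * HopfAlgebra.antipode (R := K) ((ℛ K (r.right j)).right m)) ⊗ₜ[K]
            ((ℛ K (r.left j)).right k
              * HopfAlgebra.antipode (R := K) ((ℛ K (r.right j)).left m)) := by
    simp only [prod_expand]
  rw [lhs_eq, base2]
  -- second rotation, per j
  have rot2 : ∀ j ∈ r.index,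
      ∑ k ∈ (ℛ K (r.right j)).index, ∑ m ∈ (ℛ K ((ℛ K (r.right j)).right k)).index,
        (r.left j
            * HopfAlgebra.antipode (R := K) ((ℛ K ((ℛ K (r.right j)).right k)).right m))
          ⊗ₜ[K]
          ((ℛ K (r.right j)).left k
            * HopfAlgebra.antipode (R := K) ((ℛ K ((ℛ K (r.right j)).right k)).left m))
      = (r.left j * HopfAlgebra.antipode (R := K) (r.right j)) ⊗ₜ[K] (1 : H) := by
    intro j _
    have basej := Coalgebra.sum_tmul_tmul_eq (ℛ K (r.right j))
      (fun m => ℛ K ((ℛ K (r.right j)).left m)) (fun k => ℛ K ((ℛ K (r.right j)).right k))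
    have basej2 := congrArg (fun t => ThetaS (K := K)
      ((TensorProduct.mk K H (H ⊗[K] (H ⊗[K] H)) (r.left j)) t)) basej
    simp only [map_sum, TensorProduct.mk_apply, ThetaS_tmul] at basej2
    rw [← basej2]
    -- now collapse the left-hand side of basej2
    have c1 : ∀ m ∈ (ℛ K (r.right j)).index,
        ∑ k ∈ (ℛ K ((ℛ K (r.right j)).left m)).index,
          (r.left j * HopfAlgebra.antipode (R := K) ((ℛ K (r.right j)).right m)) ⊗ₜ[K]
            ((ℛ K ((ℛ K (r.right j)).left m)).left k
              * HopfAlgebra.antipode (R := K) ((ℛ K ((ℛ K (r.right j)).left m)).right k))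
        = Coalgebra.counit (R := K) ((ℛ K (r.right j)).left m)
            • ((r.left j * HopfAlgebra.antipode (R := K) ((ℛ K (r.right j)).right m))
                ⊗ₜ[K] (1 : H)) := by
      intro m _
      exact innerE (ℛ K ((ℛ K (r.right j)).left m)) _
    rw [Finset.sum_congr rfl c1, innerF (ℛ K (r.right j)) (r.left j)]
  rw [Finset.sum_congr rfl rot2]
  have fin := collapse_mul_antipode r ((TensorProduct.mk K H H).flip 1)
  simp only [LinearMap.flip_apply, TensorProduct.mk_apply] at fin
  rw [fin, Algebra.TensorProduct.one_def]

lemma innerD {w : H} (rw : Repr K w ι) (C : H ⊗[K] H) :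
    ∑ j ∈ rw.index,
      Coalgebra.comul (R := K) (HopfAlgebra.antipode (R := K) (rw.left j))
        * (Coalgebra.comul (R := K) (rw.right j) * C)
      = Coalgebra.counit (R := K) w • C := by
  have e1 : ∀ j ∈ rw.index,
      Coalgebra.comul (R := K) (HopfAlgebra.antipode (R := K) (rw.left j))
          * (Coalgebra.comul (R := K) (rw.right j) * C)
        = (LinearMap.mulRight K C ∘ₗ Coalgebra.comul)
            (HopfAlgebra.antipode (R := K) (rw.left j) * rw.right j) := by
    intro j _
    simp only [LinearMap.comp_apply, LinearMap.mulRight_apply, Bialgebra.comul_mul, mul_assoc]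
  rw [Finset.sum_congr rfl e1, collapse_antipode_mul]
  simp

/-- The map used to compute `Δ ∘ S` two ways. -/
noncomputable def LamC : H ⊗[K] (H ⊗[K] H) →ₗ[K] H ⊗[K] H :=
  LinearMap.mul' K (H ⊗[K] H)
    ∘ₗ LinearMap.lTensor (H ⊗[K] H) (LinearMap.mul' K (H ⊗[K] H))
    ∘ₗ TensorProduct.map (Coalgebra.comul ∘ₗ HopfAlgebra.antipode (R := K))
        (TensorProduct.map Coalgebra.comul (antiG (K := K)))

lemma LamC_tmul (a1 a2 a3 : H) :
    LamC (a1 ⊗ₜ[K] (a2 ⊗ₜ[K] a3))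
      = Coalgebra.comul (R := K) (HopfAlgebra.antipode (R := K) a1)
          * (Coalgebra.comul (R := K) a2 * antiG (K := K) a3) := by
  simp [LamC]

theorem comul_antipode (x : H) :
    Coalgebra.comul (R := K) (HopfAlgebra.antipode (R := K) x) = antiG (K := K) x := by
  have key1 : LamC (K := K) (DCP.comul2 K x)
      = Coalgebra.comul (R := K) (HopfAlgebra.antipode (R := K) x) := by
    rw [comul2_repr (ℛ K x) (fun i => ℛ K ((ℛ K x).right i))]
    simp only [map_sum, LamC_tmul]
    have e1 : ∀ i ∈ (ℛ K x).index,
        ∑ j ∈ (ℛ K ((ℛ K x).right i)).index,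
          Coalgebra.comul (R := K) (HopfAlgebra.antipode (R := K) ((ℛ K x).left i))
            * (Coalgebra.comul (R := K) ((ℛ K ((ℛ K x).right i)).left j)
                * antiG (K := K) ((ℛ K ((ℛ K x).right i)).right j))
        = Coalgebra.counit (R := K) ((ℛ K x).right i)
            • Coalgebra.comul (R := K) (HopfAlgebra.antipode (R := K) ((ℛ K x).left i)) := by
      intro i _
      rw [← Finset.mul_sum, conv_cancel (ℛ K ((ℛ K x).right i)), mul_smul_comm, mul_one]
    rw [Finset.sum_congr rfl e1]
    have := collapse_counit_right (ℛ K x)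
      ((Coalgebra.comul : H →ₗ[K] H ⊗[K] H) ∘ₗ (HopfAlgebra.antipode (R := K) : H →ₗ[K] H))
    simpa using this
  have key2 : LamC (K := K) (DCP.comul2 K x) = antiG (K := K) x := by
    rw [← comul2_left (ℛ K x) (fun i => ℛ K ((ℛ K x).left i))
      (fun i => ℛ K ((ℛ K x).right i))]
    simp only [map_sum, LamC_tmul]
    have e1 : ∀ i ∈ (ℛ K x).index,
        ∑ j ∈ (ℛ K ((ℛ K x).left i)).index,
          Coalgebra.comul (R := K)
              (HopfAlgebra.antipode (R := K) ((ℛ K ((ℛ K x).left i)).left j))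
            * (Coalgebra.comul (R := K) ((ℛ K ((ℛ K x).left i)).right j)
                * antiG (K := K) ((ℛ K x).right i))
        = Coalgebra.counit (R := K) ((ℛ K x).left i)
            • antiG (K := K) ((ℛ K x).right i) :=
      fun i _ => innerD (ℛ K ((ℛ K x).left i)) _
    rw [Finset.sum_congr rfl e1]
    exact collapse_counit_left (ℛ K x) (antiG (K := K))
  rw [← key1, key2]

end DCPAux
namespace DCPAux
open Coalgebra TensorProduct LinearMap

variable {K H : Type} [Field K] [Ring H] [HopfAlgebra K H]
variable {ι ι' κ κ' : Type*}

lemma map_map_apply (f g f' g' : H →ₗ[K] H) (t : H ⊗[K] H) :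
    TensorProduct.map f g (TensorProduct.map f' g' t)
      = TensorProduct.map (f ∘ₗ f') (g ∘ₗ g') t := by
  induction t with
  | zero => simp
  | tmul a b => simp
  | add a b ha hb => simp [map_add, ha, hb]

lemma comm_map_apply (f g : H →ₗ[K] H) (t : H ⊗[K] H) :
    TensorProduct.comm K H H (TensorProduct.map f g t)
      = TensorProduct.map g f (TensorProduct.comm K H H t) := by
  induction t with
  | zero => simp
  | tmul a b => simp
  | add a b ha hb => simp [map_add, ha, hb]

lemma comm_comm_apply (t : H ⊗[K] H) :
    TensorProduct.comm K H H (TensorProduct.comm K H H t) = t := by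
  induction t with
  | zero => simp
  | tmul a b => simp
  | add a b ha hb => simp [map_add, ha, hb]

section Sinv

variable (Sinv : H →ₗ[K] H)

lemma Sinv_antipode (hS1 : Sinv ∘ₗ HopfAlgebra.antipode (R := K) (A := H) = LinearMap.id)
    (z : H) : Sinv (HopfAlgebra.antipode (R := K) z) = z := by
  have := LinearMap.congr_fun hS1 z
  simpa using this

lemma antipode_Sinv (hS2 : HopfAlgebra.antipode (R := K) (A := H) ∘ₗ Sinv = LinearMap.id)
    (z : H) : HopfAlgebra.antipode (R := K) (Sinv z) = z := by
  have := LinearMap.congr_fun hS2 z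
  simpa using this

lemma Sinv_one (hS1 : Sinv ∘ₗ HopfAlgebra.antipode (R := K) (A := H) = LinearMap.id) :
    Sinv 1 = 1 := by
  have h := Sinv_antipode Sinv hS1 1
  rwa [antipode_one] at h

lemma Sinv_mul (hS1 : Sinv ∘ₗ HopfAlgebra.antipode (R := K) (A := H) = LinearMap.id)
    (hS2 : HopfAlgebra.antipode (R := K) (A := H) ∘ₗ Sinv = LinearMap.id)
    (x y : H) : Sinv (x * y) = Sinv y * Sinv x := by
  have h : HopfAlgebra.antipode (R := K) (Sinv y * Sinv x) = x * y := by
    rw [antipode_mul, antipode_Sinv Sinv hS2, antipode_Sinv Sinv hS2]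
  rw [← h, Sinv_antipode Sinv hS1]

lemma counit_Sinv (hS2 : HopfAlgebra.antipode (R := K) (A := H) ∘ₗ Sinv = LinearMap.id)
    (x : H) :
    Coalgebra.counit (R := K) (Sinv x) = Coalgebra.counit (R := K) x := by
  have h := counit_antipode (K := K) (Sinv x)
  rw [antipode_Sinv Sinv hS2] at h
  exact h.symm

lemma comul_Sinv (hS1 : Sinv ∘ₗ HopfAlgebra.antipode (R := K) (A := H) = LinearMap.id)
    (hS2 : HopfAlgebra.antipode (R := K) (A := H) ∘ₗ Sinv = LinearMap.id)
    (x : H) :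
    Coalgebra.comul (R := K) (Sinv x)
      = TensorProduct.map Sinv Sinv (TensorProduct.comm K H H (Coalgebra.comul x)) := by
  have h := comul_antipode (K := K) (Sinv x)
  rw [antipode_Sinv Sinv hS2] at h
  have h2 : TensorProduct.comm K H H (Coalgebra.comul (R := K) (Sinv x))
      = TensorProduct.map Sinv Sinv (Coalgebra.comul (R := K) x) := by
    rw [h]
    show _ = TensorProduct.map Sinv Sinv
        ((TensorProduct.map _ _) ((TensorProduct.comm K H H)
          (Coalgebra.comul (R := K) (Sinv x))))
    rw [map_map_apply, hS1, TensorProduct.map_id]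
    rfl
  have h3 := congrArg (TensorProduct.comm K H H) h2
  rw [comm_comm_apply] at h3
  rw [h3, comm_map_apply]

lemma comul_comp_anti (hS1 : Sinv ∘ₗ HopfAlgebra.antipode (R := K) (A := H) = LinearMap.id)
    (hS2 : HopfAlgebra.antipode (R := K) (A := H) ∘ₗ Sinv = LinearMap.id)
    (f : H →ₗ[K] H)
    (hf : Coalgebra.comul (R := K) ∘ₗ f = TensorProduct.map f f ∘ₗ Coalgebra.comul)
    (z : H) :
    Coalgebra.comul (R := K) ((Sinv ∘ₗ f) z)
      = TensorProduct.map (Sinv ∘ₗ f) (Sinv ∘ₗ f)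
          (TensorProduct.comm K H H (Coalgebra.comul z)) := by
  have hfz := LinearMap.congr_fun hf z
  simp only [LinearMap.comp_apply] at hfz ⊢
  rw [comul_Sinv Sinv hS1 hS2, hfz, comm_map_apply, map_map_apply]

end Sinv

end DCPAux
namespace DCPAux
open Coalgebra TensorProduct LinearMap

variable {K H : Type} [Field K] [Ring H] [HopfAlgebra K H]
variable {ι ι' κ κ' : Type*}

lemma convMul_assoc (p q r : Module.Dual K H) :
    DCP.convMul K (DCP.convMul K p q) r = DCP.convMul K p (DCP.convMul K q r) := by
  ext x
  have base := Coalgebra.sum_tmul_tmul_eq (ℛ K x)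
    (fun i => ℛ K ((ℛ K x).left i)) (fun i => ℛ K ((ℛ K x).right i))
  set f2 : H ⊗[K] H →ₗ[K] K :=
    (TensorProduct.lid K K).toLinearMap ∘ₗ TensorProduct.map q r with hf2
  set ev3 : H ⊗[K] (H ⊗[K] H) →ₗ[K] K :=
    (TensorProduct.lid K K).toLinearMap ∘ₗ TensorProduct.map p f2 with hev3
  have base2 := congrArg ev3 base
  simp only [map_sum] at base2
  have evval : ∀ u v w : H, ev3 (u ⊗ₜ[K] (v ⊗ₜ[K] w)) = p u * (q v * r w) := by
    intro u v w
    simp [hev3, hf2, smul_eq_mul]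
  simp only [evval] at base2
  have lhs_eq : DCP.convMul K (DCP.convMul K p q) r x
      = ∑ i ∈ (ℛ K x).index, ∑ j ∈ (ℛ K ((ℛ K x).left i)).index,
          p ((ℛ K ((ℛ K x).left i)).left j) * (q ((ℛ K ((ℛ K x).left i)).right j)
            * r ((ℛ K x).right i)) := by
    rw [convMul_repr _ _ (ℛ K x)]
    refine Finset.sum_congr rfl fun i _ => ?_
    rw [convMul_repr _ _ (ℛ K ((ℛ K x).left i)), Finset.sum_mul]
    exact Finset.sum_congr rfl fun j _ => by ring
  have rhs_eq : DCP.convMul K p (DCP.convMul K q r) x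
      = ∑ i ∈ (ℛ K x).index, ∑ j ∈ (ℛ K ((ℛ K x).right i)).index,
          p ((ℛ K x).left i) * (q ((ℛ K ((ℛ K x).right i)).left j)
            * r ((ℛ K ((ℛ K x).right i)).right j)) := by
    rw [convMul_repr _ _ (ℛ K x)]
    refine Finset.sum_congr rfl fun i _ => ?_
    rw [convMul_repr _ _ (ℛ K ((ℛ K x).right i)), Finset.mul_sum]
  rw [lhs_eq, rhs_eq, base2]

lemma act_comp (q : Module.Dual K H) (a b a' b' : H) :
    (q ∘ₗ LinearMap.mulLeft K a ∘ₗ LinearMap.mulRight K b)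
        ∘ₗ LinearMap.mulLeft K a' ∘ₗ LinearMap.mulRight K b'
      = q ∘ₗ LinearMap.mulLeft K (a * a') ∘ₗ LinearMap.mulRight K (b' * b) := by
  ext x
  simp [mul_assoc]

lemma counit_act (a b : H) :
    ((Coalgebra.counit : Module.Dual K H) ∘ₗ LinearMap.mulLeft K a
        ∘ₗ LinearMap.mulRight K b)
      = (Coalgebra.counit (R := K) a * Coalgebra.counit (R := K) b)
          • (Coalgebra.counit : Module.Dual K H) := by
  ext x
  simp only [LinearMap.comp_apply, LinearMap.mulLeft_apply, LinearMap.mulRight_apply,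
    Bialgebra.counit_mul, LinearMap.smul_apply, smul_eq_mul]
  ring

lemma act_mul (q s : Module.Dual K H) {a b : H} (ra : Repr K a ι) (rb : Repr K b ι') :
    (DCP.convMul K q s) ∘ₗ LinearMap.mulLeft K a ∘ₗ LinearMap.mulRight K b
      = ∑ i ∈ ra.index, ∑ j ∈ rb.index,
          DCP.convMul K
            (q ∘ₗ LinearMap.mulLeft K (ra.left i) ∘ₗ LinearMap.mulRight K (rb.left j))
            (s ∘ₗ LinearMap.mulLeft K (ra.right i) ∘ₗ LinearMap.mulRight K (rb.right j)) := by
  ext x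
  simp only [LinearMap.comp_apply, LinearMap.mulLeft_apply, LinearMap.mulRight_apply,
    LinearMap.coe_sum, Finset.sum_apply]
  rw [convMul_repr _ _ (reprMul ra (reprMul (ℛ K x) rb))]
  simp only [reprMul]
  rw [Finset.sum_product]
  refine Finset.sum_congr rfl fun i _ => ?_
  rw [Finset.sum_product, Finset.sum_comm]
  refine Finset.sum_congr rfl fun j _ => ?_
  rw [convMul_repr _ _ (ℛ K x)]
  rfl

end DCPAux
namespace DCPAux
open Coalgebra TensorProduct LinearMap

variable {K H : Type} [Field K] [Ring H] [HopfAlgebra K H]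
variable {ι ι' κ κ' : Type*}

lemma expand_pos2 (a b c : H) :
    (LinearMap.lTensor H ((TensorProduct.assoc K H H H).toLinearMap
        ∘ₗ LinearMap.rTensor H (Coalgebra.comul (R := K)))) (a ⊗ₜ[K] (b ⊗ₜ[K] c))
      = ∑ m ∈ (ℛ K b).index,
          a ⊗ₜ[K] ((ℛ K b).left m ⊗ₜ[K] ((ℛ K b).right m ⊗ₜ[K] c)) := by
  rw [lTensor_tmul, LinearMap.comp_apply, rTensor_tmul, ← (ℛ K b).eq, sum_tmul, map_sum]
  simp only [LinearEquiv.coe_coe, _root_.TensorProduct.assoc_tmul, tmul_sum]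

lemma expand_pos3 (a b c : H) :
    (LinearMap.lTensor H (LinearMap.lTensor H (DCP.comul2 K))) (a ⊗ₜ[K] (b ⊗ₜ[K] c))
      = ∑ j ∈ (ℛ K c).index, ∑ m ∈ (ℛ K ((ℛ K c).right j)).index,
          a ⊗ₜ[K] (b ⊗ₜ[K] ((ℛ K c).left j ⊗ₜ[K]
            ((ℛ K ((ℛ K c).right j)).left m ⊗ₜ[K] (ℛ K ((ℛ K c).right j)).right m))) := by
  rw [lTensor_tmul, lTensor_tmul,
    comul2_repr (ℛ K c) (fun j => ℛ K ((ℛ K c).right j))]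
  simp only [tmul_sum]

/-- 4-leg rotation: pattern ((1,(2,3)),4) equals pattern (1,(2,(3,4))). -/
lemma pat4 (y : H) :
    ∑ j ∈ (ℛ K y).index, ∑ k ∈ (ℛ K ((ℛ K y).left j)).index,
      ∑ m ∈ (ℛ K ((ℛ K ((ℛ K y).left j)).right k)).index,
        (ℛ K ((ℛ K y).left j)).left k ⊗ₜ[K]
          ((ℛ K ((ℛ K ((ℛ K y).left j)).right k)).left m ⊗ₜ[K]
            ((ℛ K ((ℛ K ((ℛ K y).left j)).right k)).right m ⊗ₜ[K] (ℛ K y).right j))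
    = ∑ j ∈ (ℛ K y).index, ∑ k ∈ (ℛ K ((ℛ K y).right j)).index,
      ∑ m ∈ (ℛ K ((ℛ K ((ℛ K y).right j)).right k)).index,
        (ℛ K y).left j ⊗ₜ[K]
          ((ℛ K ((ℛ K y).right j)).left k ⊗ₜ[K]
            ((ℛ K ((ℛ K ((ℛ K y).right j)).right k)).left m ⊗ₜ[K]
              (ℛ K ((ℛ K ((ℛ K y).right j)).right k)).right m)) := by
  have base := Coalgebra.sum_tmul_tmul_eq (ℛ K y)
    (fun j => ℛ K ((ℛ K y).left j)) (fun j => ℛ K ((ℛ K y).right j))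
  have base2 := congrArg (fun t => (LinearMap.lTensor H
    ((TensorProduct.assoc K H H H).toLinearMap
      ∘ₗ LinearMap.rTensor H (Coalgebra.comul (R := K)))) t) base
  simp only [map_sum, expand_pos2] at base2
  rw [base2]
  refine Finset.sum_congr rfl fun j _ => ?_
  have basej := Coalgebra.sum_tmul_tmul_eq (ℛ K ((ℛ K y).right j))
    (fun k => ℛ K ((ℛ K ((ℛ K y).right j)).left k))
    (fun k => ℛ K ((ℛ K ((ℛ K y).right j)).right k))
  have basej2 := congrArg (fun t =>
    (TensorProduct.mk K H (H ⊗[K] (H ⊗[K] H)) ((ℛ K y).left j)) t) basej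
  simp only [map_sum, TensorProduct.mk_apply] at basej2
  exact basej2

/-- 5-leg: the "left-tree" expansion equals the right comb. -/
lemma TL_eq_CB (h : H) :
    (∑ i ∈ (ℛ K h).index, ∑ j ∈ (ℛ K ((ℛ K h).right i)).index,
      ∑ k ∈ (ℛ K ((ℛ K ((ℛ K h).right i)).left j)).index,
      ∑ m ∈ (ℛ K ((ℛ K ((ℛ K ((ℛ K h).right i)).left j)).right k)).index,
        (ℛ K h).left i ⊗ₜ[K]
          ((ℛ K ((ℛ K ((ℛ K h).right i)).left j)).left k ⊗ₜ[K]
            ((ℛ K ((ℛ K ((ℛ K ((ℛ K h).right i)).left j)).right k)).left m ⊗ₜ[K]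
              ((ℛ K ((ℛ K ((ℛ K ((ℛ K h).right i)).left j)).right k)).right m ⊗ₜ[K]
                (ℛ K ((ℛ K h).right i)).right j))))
    = ∑ i ∈ (ℛ K h).index, ∑ k ∈ (ℛ K ((ℛ K h).right i)).index,
      ∑ j ∈ (ℛ K ((ℛ K ((ℛ K h).right i)).right k)).index,
      ∑ m ∈ (ℛ K ((ℛ K ((ℛ K ((ℛ K h).right i)).right k)).right j)).index,
        (ℛ K h).left i ⊗ₜ[K]
          ((ℛ K ((ℛ K h).right i)).left k ⊗ₜ[K]
            ((ℛ K ((ℛ K ((ℛ K h).right i)).right k)).left j ⊗ₜ[K]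
              ((ℛ K ((ℛ K ((ℛ K ((ℛ K h).right i)).right k)).right j)).left m ⊗ₜ[K]
                (ℛ K ((ℛ K ((ℛ K ((ℛ K h).right i)).right k)).right j)).right m))) := by
  refine Finset.sum_congr rfl fun i _ => ?_
  have := congrArg (fun t =>
    (TensorProduct.mk K H (H ⊗[K] (H ⊗[K] (H ⊗[K] H))) ((ℛ K h).left i)) t)
    (pat4 (K := K) ((ℛ K h).right i))
  simp only [map_sum, TensorProduct.mk_apply] at this
  exact this

/-- 5-leg: the "right-tree" expansion equals the right comb. -/
lemma TR_eq_CB (h : H) :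
    (∑ i ∈ (ℛ K h).index, ∑ k ∈ (ℛ K ((ℛ K h).left i)).index,
      ∑ j ∈ (ℛ K ((ℛ K h).right i)).index,
      ∑ m ∈ (ℛ K ((ℛ K ((ℛ K h).right i)).right j)).index,
        (ℛ K ((ℛ K h).left i)).left k ⊗ₜ[K]
          ((ℛ K ((ℛ K h).left i)).right k ⊗ₜ[K]
            ((ℛ K ((ℛ K h).right i)).left j ⊗ₜ[K]
              ((ℛ K ((ℛ K ((ℛ K h).right i)).right j)).left m ⊗ₜ[K]
                (ℛ K ((ℛ K ((ℛ K h).right i)).right j)).right m))))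
    = ∑ i ∈ (ℛ K h).index, ∑ k ∈ (ℛ K ((ℛ K h).right i)).index,
      ∑ j ∈ (ℛ K ((ℛ K ((ℛ K h).right i)).right k)).index,
      ∑ m ∈ (ℛ K ((ℛ K ((ℛ K ((ℛ K h).right i)).right k)).right j)).index,
        (ℛ K h).left i ⊗ₜ[K]
          ((ℛ K ((ℛ K h).right i)).left k ⊗ₜ[K]
            ((ℛ K ((ℛ K ((ℛ K h).right i)).right k)).left j ⊗ₜ[K]
              ((ℛ K ((ℛ K ((ℛ K ((ℛ K h).right i)).right k)).right j)).left m ⊗ₜ[K]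
                (ℛ K ((ℛ K ((ℛ K ((ℛ K h).right i)).right k)).right j)).right m))) := by
  have base := Coalgebra.sum_tmul_tmul_eq (ℛ K h)
    (fun i => ℛ K ((ℛ K h).left i)) (fun i => ℛ K ((ℛ K h).right i))
  have base2 := congrArg (fun t =>
    (LinearMap.lTensor H (LinearMap.lTensor H (DCP.comul2 K))) t) base
  simp only [map_sum, expand_pos3] at base2
  exact base2

end DCPAux
namespace DCPAux
open Coalgebra TensorProduct LinearMap

variable {K H : Type} [Field K] [Ring H] [HopfAlgebra K H]
variable {ι ι' κ κ' : Type*}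

/-- `(a, c) ↦ (x ↦ q (g c * (x * f a)))` as a bilinear map. -/
noncomputable def Bact (f g : H →ₗ[K] H) (q : Module.Dual K H) :
    H →ₗ[K] H →ₗ[K] Module.Dual K H :=
  LinearMap.mk₂ K
    (fun a c => q ∘ₗ LinearMap.mulLeft K (g c) ∘ₗ LinearMap.mulRight K (f a))
    (fun a a' c => by ext x; simp [map_add, mul_add, add_mul])
    (fun k a c => by ext x; simp [map_smul, mul_smul_comm, smul_mul_assoc])
    (fun a c c' => by ext x; simp [map_add, mul_add, add_mul])
    (fun k a c => by ext x; simp [map_smul, mul_smul_comm, smul_mul_assoc])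

@[simp] lemma Bact_apply (f g : H →ₗ[K] H) (q : Module.Dual K H) (a c : H) :
    Bact f g q a c
      = q ∘ₗ LinearMap.mulLeft K (g c) ∘ₗ LinearMap.mulRight K (f a) := rfl

/-- Evaluation map for the five-legged normal form of the associativity proof. -/
noncomputable def LamA (f1 g1 f2 g2 : H →ₗ[K] H) (p q r : Module.Dual K H) (w : H) :
    H ⊗[K] (H ⊗[K] (H ⊗[K] (H ⊗[K] H))) →ₗ[K] Module.Dual K H ⊗[K] H :=
  TensorProduct.map (DCP.convMul K p) (LinearMap.mulRight K w)
    ∘ₗ TensorProduct.map (TensorProduct.lift (DCP.convMul K)) LinearMap.id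
    ∘ₗ (TensorProduct.assoc K (Module.Dual K H) (Module.Dual K H) H).symm.toLinearMap
    ∘ₗ TensorProduct.map (TensorProduct.lift (Bact f1 g1 q))
        (TensorProduct.map (TensorProduct.lift (Bact f2 g2 r)) LinearMap.id)
    ∘ₗ LinearMap.lTensor (H ⊗[K] H)
        ((TensorProduct.assoc K H H H).symm.toLinearMap
          ∘ₗ LinearMap.lTensor H (TensorProduct.comm K H H).toLinearMap)
    ∘ₗ (TensorProduct.assoc K H H (H ⊗[K] (H ⊗[K] H))).symm.toLinearMap
    ∘ₗ LinearMap.lTensor H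
        (TensorProduct.comm K (H ⊗[K] (H ⊗[K] H)) H).toLinearMap
    ∘ₗ LinearMap.lTensor H ((TensorProduct.assoc K H (H ⊗[K] H) H).symm.toLinearMap)
    ∘ₗ LinearMap.lTensor H (LinearMap.lTensor H
        ((TensorProduct.assoc K H H H).symm.toLinearMap))

lemma LamA_tmul (f1 g1 f2 g2 : H →ₗ[K] H) (p q r : Module.Dual K H) (w : H)
    (h1 h2 h3 h4 h5 : H) :
    LamA f1 g1 f2 g2 p q r w (h1 ⊗ₜ[K] (h2 ⊗ₜ[K] (h3 ⊗ₜ[K] (h4 ⊗ₜ[K] h5))))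
      = DCP.convMul K p
          (DCP.convMul K
            (q ∘ₗ LinearMap.mulLeft K (g1 h5) ∘ₗ LinearMap.mulRight K (f1 h1))
            (r ∘ₗ LinearMap.mulLeft K (g2 h4) ∘ₗ LinearMap.mulRight K (f2 h2)))
        ⊗ₜ[K] (h3 * w) := by
  simp [LamA]

end DCPAux
namespace DCPAux
open Coalgebra TensorProduct LinearMap

variable {K H : Type} [Field K] [Ring H] [HopfAlgebra K H]
variable {ι ι' κ κ' : Type*}

lemma dprod_std (αl βl Sinv : H →ₗ[K] H) (p Q : Module.Dual K H) (h w : H) :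
    DCP.dprod K αl βl Sinv p h Q w
      = ∑ i ∈ (ℛ K h).index, ∑ j ∈ (ℛ K ((ℛ K h).right i)).index,
        DCP.convMul K p
          (Q ∘ₗ LinearMap.mulLeft K (Sinv (βl ((ℛ K ((ℛ K h).right i)).right j)))
             ∘ₗ LinearMap.mulRight K (αl ((ℛ K h).left i)))
          ⊗ₜ[K] ((ℛ K ((ℛ K h).right i)).left j * w) :=
  dprod_repr αl βl Sinv p Q h w (ℛ K h) (fun i => ℛ K ((ℛ K h).right i))

lemma dprod_muls (αl βl Sinv : H →ₗ[K] H) (P R : Module.Dual K H) (u l m : H) :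
    DCP.dprod K αl βl Sinv P (u * l) R m
      = ∑ s' ∈ (ℛ K l).index, ∑ t' ∈ (ℛ K ((ℛ K l).right s')).index,
        ∑ s ∈ (ℛ K u).index, ∑ t ∈ (ℛ K ((ℛ K u).right s)).index,
          DCP.convMul K P
            (R ∘ₗ LinearMap.mulLeft K (Sinv (βl
                  ((ℛ K ((ℛ K u).right s)).right t * (ℛ K ((ℛ K l).right s')).right t')))
               ∘ₗ LinearMap.mulRight K (αl ((ℛ K u).left s * (ℛ K l).left s')))
            ⊗ₜ[K] ((ℛ K ((ℛ K u).right s)).left t * (ℛ K ((ℛ K l).right s')).left t' * m) := by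
  rw [dprod_repr αl βl Sinv P R (u * l) m (reprMul (ℛ K u) (ℛ K l))
    (fun z => reprMul (ℛ K ((ℛ K u).right z.1)) (ℛ K ((ℛ K l).right z.2)))]
  simp only [reprMul]
  rw [Finset.sum_product]
  simp only [Finset.sum_product]
  conv_lhs => enter [2, s, 2, s']; rw [Finset.sum_comm]
  rw [Finset.sum_comm]
  conv_lhs => enter [2, s']; rw [Finset.sum_comm]

lemma conv_act (αl βl Sinv : H →ₗ[K] H)
    (hαmul : ∀ x y : H, αl (x * y) = αl x * αl y)
    (hαcomul : ∀ z : H, Coalgebra.comul (R := K) (αl z)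
      = TensorProduct.map αl αl (Coalgebra.comul z))
    (hSβmul : ∀ x y : H, Sinv (βl (x * y)) = Sinv (βl y) * Sinv (βl x))
    (hSβcomul : ∀ z : H, Coalgebra.comul (R := K) ((Sinv ∘ₗ βl) z)
      = TensorProduct.map (Sinv ∘ₗ βl) (Sinv ∘ₗ βl)
          (TensorProduct.comm K H H (Coalgebra.comul z)))
    (q R : Module.Dual K H) (A B h₁ h₃ : H) :
    (DCP.convMul K q
        (R ∘ₗ LinearMap.mulLeft K (Sinv (βl B)) ∘ₗ LinearMap.mulRight K (αl A)))
        ∘ₗ LinearMap.mulLeft K (Sinv (βl h₃)) ∘ₗ LinearMap.mulRight K (αl h₁)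
      = ∑ k' ∈ (ℛ K h₁).index, ∑ k ∈ (ℛ K h₃).index,
          DCP.convMul K
            (q ∘ₗ LinearMap.mulLeft K (Sinv (βl ((ℛ K h₃).right k)))
               ∘ₗ LinearMap.mulRight K (αl ((ℛ K h₁).left k')))
            (R ∘ₗ LinearMap.mulLeft K (Sinv (βl ((ℛ K h₃).left k * B)))
               ∘ₗ LinearMap.mulRight K (αl ((ℛ K h₁).right k' * A))) := by
  have am := act_mul (K := K) q
    (R ∘ₗ LinearMap.mulLeft K (Sinv (βl B)) ∘ₗ LinearMap.mulRight K (αl A))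
    (reprAnti (Sinv ∘ₗ βl) hSβcomul (ℛ K h₃)) (reprMap αl hαcomul (ℛ K h₁))
  simp only [reprAnti, reprMap, LinearMap.comp_apply] at am
  rw [am, Finset.sum_comm]
  refine Finset.sum_congr rfl fun k' _ => Finset.sum_congr rfl fun k _ => ?_
  rw [act_comp, ← hSβmul, ← hαmul]

lemma mid_eq (f1 g1 f2 g2 : H →ₗ[K] H) (p q r : Module.Dual K H) (w h : H) :
    (∑ i ∈ (ℛ K h).index, ∑ j ∈ (ℛ K ((ℛ K h).right i)).index,
      ∑ s ∈ (ℛ K ((ℛ K ((ℛ K h).right i)).left j)).index,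
      ∑ t ∈ (ℛ K ((ℛ K ((ℛ K ((ℛ K h).right i)).left j)).right s)).index,
        LamA f1 g1 f2 g2 p q r w
          ((ℛ K h).left i ⊗ₜ[K]
            ((ℛ K ((ℛ K ((ℛ K h).right i)).left j)).left s ⊗ₜ[K]
              ((ℛ K ((ℛ K ((ℛ K ((ℛ K h).right i)).left j)).right s)).left t ⊗ₜ[K]
                ((ℛ K ((ℛ K ((ℛ K ((ℛ K h).right i)).left j)).right s)).right t ⊗ₜ[K]
                  (ℛ K ((ℛ K h).right i)).right j)))))
    = ∑ i ∈ (ℛ K h).index, ∑ k' ∈ (ℛ K ((ℛ K h).left i)).index,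
      ∑ j ∈ (ℛ K ((ℛ K h).right i)).index,
      ∑ k ∈ (ℛ K ((ℛ K ((ℛ K h).right i)).right j)).index,
        LamA f1 g1 f2 g2 p q r w
          ((ℛ K ((ℛ K h).left i)).left k' ⊗ₜ[K]
            ((ℛ K ((ℛ K h).left i)).right k' ⊗ₜ[K]
              ((ℛ K ((ℛ K h).right i)).left j ⊗ₜ[K]
                ((ℛ K ((ℛ K ((ℛ K h).right i)).right j)).left k ⊗ₜ[K]
                  (ℛ K ((ℛ K ((ℛ K h).right i)).right j)).right k)))) := by
  have e1 := congrArg (LamA f1 g1 f2 g2 p q r w)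
    ((TL_eq_CB (K := K) h).trans ((TR_eq_CB (K := K) h).symm))
  simpa only [map_sum] using e1

set_option maxHeartbeats 2000000 in
theorem dprod_assoc (αl βl Sinv : H →ₗ[K] H)
    (hαmul : ∀ x y : H, αl (x * y) = αl x * αl y)
    (hαcomul : ∀ z : H, Coalgebra.comul (R := K) (αl z)
      = TensorProduct.map αl αl (Coalgebra.comul z))
    (hSβmul : ∀ x y : H, Sinv (βl (x * y)) = Sinv (βl y) * Sinv (βl x))
    (hSβcomul : ∀ z : H, Coalgebra.comul (R := K) ((Sinv ∘ₗ βl) z)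
      = TensorProduct.map (Sinv ∘ₗ βl) (Sinv ∘ₗ βl)
          (TensorProduct.comm K H H (Coalgebra.comul z)))
    (p q r : Module.Dual K H) (h l m : H) :
    (∑ i ∈ (ℛ K h).index, ∑ j ∈ (ℛ K ((ℛ K h).right i)).index,
      DCP.dprod K αl βl Sinv
        (DCP.convMul K p
          (q ∘ₗ LinearMap.mulLeft K (Sinv (βl ((ℛ K ((ℛ K h).right i)).right j)))
             ∘ₗ LinearMap.mulRight K (αl ((ℛ K h).left i))))
        ((ℛ K ((ℛ K h).right i)).left j * l) r m)
    = ∑ s ∈ (ℛ K l).index, ∑ t ∈ (ℛ K ((ℛ K l).right s)).index,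
      DCP.dprod K αl βl Sinv p h
        (DCP.convMul K q
          (r ∘ₗ LinearMap.mulLeft K (Sinv (βl ((ℛ K ((ℛ K l).right s)).right t)))
             ∘ₗ LinearMap.mulRight K (αl ((ℛ K l).left s))))
        ((ℛ K ((ℛ K l).right s)).left t * m) := by
  have lhs_eq :
      (∑ i ∈ (ℛ K h).index, ∑ j ∈ (ℛ K ((ℛ K h).right i)).index,
        DCP.dprod K αl βl Sinv
          (DCP.convMul K p
            (q ∘ₗ LinearMap.mulLeft K (Sinv (βl ((ℛ K ((ℛ K h).right i)).right j)))
               ∘ₗ LinearMap.mulRight K (αl ((ℛ K h).left i))))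
          ((ℛ K ((ℛ K h).right i)).left j * l) r m)
      = ∑ s' ∈ (ℛ K l).index, ∑ t' ∈ (ℛ K ((ℛ K l).right s')).index,
        ∑ i ∈ (ℛ K h).index, ∑ j ∈ (ℛ K ((ℛ K h).right i)).index,
        ∑ s ∈ (ℛ K ((ℛ K ((ℛ K h).right i)).left j)).index,
        ∑ t ∈ (ℛ K ((ℛ K ((ℛ K ((ℛ K h).right i)).left j)).right s)).index,
          LamA αl (Sinv ∘ₗ βl) (αl ∘ₗ LinearMap.mulRight K ((ℛ K l).left s'))
            (Sinv ∘ₗ βl ∘ₗ LinearMap.mulRight K ((ℛ K ((ℛ K l).right s')).right t'))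
            p q r ((ℛ K ((ℛ K l).right s')).left t' * m)
            ((ℛ K h).left i ⊗ₜ[K]
              ((ℛ K ((ℛ K ((ℛ K h).right i)).left j)).left s ⊗ₜ[K]
                ((ℛ K ((ℛ K ((ℛ K ((ℛ K h).right i)).left j)).right s)).left t ⊗ₜ[K]
                  ((ℛ K ((ℛ K ((ℛ K ((ℛ K h).right i)).left j)).right s)).right t ⊗ₜ[K]
                    (ℛ K ((ℛ K h).right i)).right j)))) := by
    simp only [dprod_muls]
    conv_lhs => enter [2, i]; rw [Finset.sum_comm]
    rw [Finset.sum_comm]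
    conv_lhs => enter [2, s', 2, i]; rw [Finset.sum_comm]
    conv_lhs => enter [2, s']; rw [Finset.sum_comm]
    simp only [LamA_tmul, LinearMap.comp_apply, LinearMap.mulRight_apply, convMul_assoc,
      mul_assoc]
  have rhs_eq :
      (∑ s ∈ (ℛ K l).index, ∑ t ∈ (ℛ K ((ℛ K l).right s)).index,
        DCP.dprod K αl βl Sinv p h
          (DCP.convMul K q
            (r ∘ₗ LinearMap.mulLeft K (Sinv (βl ((ℛ K ((ℛ K l).right s)).right t)))
               ∘ₗ LinearMap.mulRight K (αl ((ℛ K l).left s))))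
          ((ℛ K ((ℛ K l).right s)).left t * m))
      = ∑ s' ∈ (ℛ K l).index, ∑ t' ∈ (ℛ K ((ℛ K l).right s')).index,
        ∑ i ∈ (ℛ K h).index, ∑ k' ∈ (ℛ K ((ℛ K h).left i)).index,
        ∑ j ∈ (ℛ K ((ℛ K h).right i)).index,
        ∑ k ∈ (ℛ K ((ℛ K ((ℛ K h).right i)).right j)).index,
          LamA αl (Sinv ∘ₗ βl) (αl ∘ₗ LinearMap.mulRight K ((ℛ K l).left s'))
            (Sinv ∘ₗ βl ∘ₗ LinearMap.mulRight K ((ℛ K ((ℛ K l).right s')).right t'))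
            p q r ((ℛ K ((ℛ K l).right s')).left t' * m)
            ((ℛ K ((ℛ K h).left i)).left k' ⊗ₜ[K]
              ((ℛ K ((ℛ K h).left i)).right k' ⊗ₜ[K]
                ((ℛ K ((ℛ K h).right i)).left j ⊗ₜ[K]
                  ((ℛ K ((ℛ K ((ℛ K h).right i)).right j)).left k ⊗ₜ[K]
                    (ℛ K ((ℛ K ((ℛ K h).right i)).right j)).right k)))) := by
    simp only [dprod_std αl βl Sinv p]
    simp only [conv_act αl βl Sinv hαmul hαcomul hSβmul hSβcomul q r]
    simp only [map_sum, sum_tmul]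
    conv_lhs => enter [2, s', 2, t', 2, i]; rw [Finset.sum_comm]
    simp only [LamA_tmul, LinearMap.comp_apply, LinearMap.mulRight_apply]
  rw [lhs_eq, rhs_eq]
  refine Finset.sum_congr rfl fun s' _ => Finset.sum_congr rfl fun t' _ => ?_
  exact mid_eq _ _ _ _ p q r _ h

end DCPAux
namespace DCPAux
open Coalgebra TensorProduct LinearMap

variable {K H : Type} [Field K] [Ring H] [HopfAlgebra K H]
variable {ι ι' κ κ' : Type*}

lemma dprod_one_left (αl βl Sinv : H →ₗ[K] H)
    (hα1 : αl 1 = 1) (hβ1 : βl 1 = 1) (hSinv1 : Sinv 1 = 1)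
    (p Q : Module.Dual K H) (w : H) :
    DCP.dprod K αl βl Sinv p 1 Q w = DCP.convMul K p Q ⊗ₜ[K] w := by
  rw [dprod_repr αl βl Sinv p Q 1 w reprOne (fun _ => reprOne)]
  simp only [reprOne, Finset.sum_singleton, hα1, hβ1, hSinv1, LinearMap.mulLeft_one,
    LinearMap.mulRight_one, one_mul]
  rw [LinearMap.comp_id, LinearMap.comp_id]

lemma miniU1 {y : H} (r : Repr K y ι) (c : K) (p : Module.Dual K H) (w : H) :
    ∑ j ∈ r.index, (Coalgebra.counit (R := K) (r.right j) * c)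
        • (p ⊗ₜ[K] (r.left j * w))
      = c • (p ⊗ₜ[K] (y * w)) := by
  have e1 : ∀ j ∈ r.index,
      (Coalgebra.counit (R := K) (r.right j) * c) • (p ⊗ₜ[K] (r.left j * w))
        = c • (Coalgebra.counit (R := K) (r.right j)
            • ((TensorProduct.mk K (Module.Dual K H) H p ∘ₗ LinearMap.mulRight K w)
                (r.left j))) := by
    intro j _
    rw [mul_comm, mul_smul]
    rfl
  rw [Finset.sum_congr rfl e1, ← Finset.smul_sum, collapse_counit_right r]
  rfl

lemma miniU2 {h : H} (rh : Repr K h ι) (p : Module.Dual K H) (w : H) :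
    ∑ i ∈ rh.index, Coalgebra.counit (R := K) (rh.left i) • (p ⊗ₜ[K] (rh.right i * w))
      = p ⊗ₜ[K] (h * w) := by
  have := collapse_counit_left rh
    (TensorProduct.mk K (Module.Dual K H) H p ∘ₗ LinearMap.mulRight K w)
  simpa using this

lemma dprod_counit_right (αl βl Sinv : H →ₗ[K] H)
    (hαε : ∀ z : H, Coalgebra.counit (R := K) (αl z) = Coalgebra.counit (R := K) z)
    (hβSε : ∀ z : H, Coalgebra.counit (R := K) (Sinv (βl z)) = Coalgebra.counit (R := K) z)
    (p : Module.Dual K H) (h w : H) :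
    DCP.dprod K αl βl Sinv p h (Coalgebra.counit (R := K)) w = p ⊗ₜ[K] (h * w) := by
  rw [dprod_std]
  simp only [counit_act, hαε, hβSε, map_smul, convMul_counit_right,
    ← TensorProduct.smul_tmul', miniU1, miniU2]

end DCPAux

/-- The diagonal crossed product `H* ⋈ H_(α,β)` is a unital associative algebra with unit
`ε ⋈ 1`, and `p ↦ p ⋈ 1`, `h ↦ ε ⋈ h` are injective algebra maps. -/
theorem stmt3 (K H : Type) [Field K] [Ring H] [HopfAlgebra K H] [FiniteDimensional K H]
    (Sinv : H →ₗ[K] H)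
    (hS1 : Sinv ∘ₗ HopfAlgebra.antipode (R := K) (A := H) = LinearMap.id)
    (hS2 : HopfAlgebra.antipode (R := K) (A := H) ∘ₗ Sinv = LinearMap.id)
    (α β : H ≃ₗ[K] H)
    (hα : DCP.IsHopfAut K α)
    (hβ : DCP.IsHopfAut K β)
    (M : Module.Dual K H ⊗[K] H →ₗ[K] Module.Dual K H ⊗[K] H →ₗ[K] Module.Dual K H ⊗[K] H)
    (hM : ∀ (p : Module.Dual K H) (h : H) (q : Module.Dual K H) (l : H),
      M (p ⊗ₜ[K] h) (q ⊗ₜ[K] l) = DCP.dprod K (α.toLinearMap) (β.toLinearMap) Sinv p h q l)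
    :
    (∀ x y z : Module.Dual K H ⊗[K] H, M (M x y) z = M x (M y z)) ∧
    (∀ x : Module.Dual K H ⊗[K] H,
      M ((Coalgebra.counit : Module.Dual K H) ⊗ₜ[K] (1 : H)) x = x ∧
      M x ((Coalgebra.counit : Module.Dual K H) ⊗ₜ[K] (1 : H)) = x) ∧
    (∀ p p' : Module.Dual K H,
      M (p ⊗ₜ[K] (1 : H)) (p' ⊗ₜ[K] (1 : H)) = (DCP.convMul K p p') ⊗ₜ[K] (1 : H)) ∧
    Function.Injective (DCP.toD1 K (H := H)) ∧
    (∀ h l : H, M (DCP.toD2 K h) (DCP.toD2 K l) = DCP.toD2 K (h * l)) ∧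
    Function.Injective (DCP.toD2 K (H := H)) := by
  classical
  open DCPAux in
  obtain ⟨hαmul0, hα10, hαcomul, hαcounit⟩ := hα
  obtain ⟨hβmul0, hβ10, hβcomul, hβcounit⟩ := hβ
  have hαmul : ∀ x y : H, α.toLinearMap (x * y) = α.toLinearMap x * α.toLinearMap y := hαmul0
  have hβmul : ∀ x y : H, β.toLinearMap (x * y) = β.toLinearMap x * β.toLinearMap y := hβmul0
  have hα1 : α.toLinearMap (1 : H) = 1 := hα10
  have hβ1 : β.toLinearMap (1 : H) = 1 := hβ10
  have hαc : ∀ z : H, Coalgebra.comul (R := K) (α.toLinearMap z)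
      = TensorProduct.map α.toLinearMap α.toLinearMap (Coalgebra.comul z) := by
    intro z
    have := LinearMap.congr_fun hαcomul z
    simpa using this
  have hαe : ∀ z : H, Coalgebra.counit (R := K) (α.toLinearMap z)
      = Coalgebra.counit (R := K) z := by
    intro z
    have := LinearMap.congr_fun hαcounit z
    simpa using this
  have hβe : ∀ z : H, Coalgebra.counit (R := K) (β.toLinearMap z)
      = Coalgebra.counit (R := K) z := by
    intro z
    have := LinearMap.congr_fun hβcounit z
    simpa using this
  have hSβmul : ∀ x y : H, Sinv (β.toLinearMap (x * y))
      = Sinv (β.toLinearMap y) * Sinv (β.toLinearMap x) := by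
    intro x y
    rw [hβmul, DCPAux.Sinv_mul Sinv hS1 hS2]
  have hSβcomul := DCPAux.comul_comp_anti Sinv hS1 hS2 β.toLinearMap hβcomul
  have hβSe : ∀ z : H, Coalgebra.counit (R := K) (Sinv (β.toLinearMap z))
      = Coalgebra.counit (R := K) z := by
    intro z
    rw [DCPAux.counit_Sinv Sinv hS2, hβe]
  have hS1' : Sinv (1 : H) = 1 := DCPAux.Sinv_one Sinv hS1
  have assoc_pure : ∀ (p : Module.Dual K H) (h : H) (q : Module.Dual K H) (l : H)
      (r : Module.Dual K H) (m : H),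
      M (M (p ⊗ₜ[K] h) (q ⊗ₜ[K] l)) (r ⊗ₜ[K] m)
        = M (p ⊗ₜ[K] h) (M (q ⊗ₜ[K] l) (r ⊗ₜ[K] m)) := by
    intro p h q l r m
    rw [hM p h q l, hM q l r m,
      DCPAux.dprod_std α.toLinearMap β.toLinearMap Sinv p q h l,
      DCPAux.dprod_std α.toLinearMap β.toLinearMap Sinv q r l m]
    simp only [map_sum, LinearMap.sum_apply, hM]
    exact DCPAux.dprod_assoc α.toLinearMap β.toLinearMap Sinv hαmul hαc hSβmul hSβcomul
      p q r h l m
  have unitl_pure : ∀ (q : Module.Dual K H) (l : H),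
      M ((Coalgebra.counit : Module.Dual K H) ⊗ₜ[K] (1 : H)) (q ⊗ₜ[K] l) = q ⊗ₜ[K] l := by
    intro q l
    rw [hM, DCPAux.dprod_one_left _ _ _ hα1 hβ1 hS1', DCPAux.convMul_counit_left]
  have unitr_pure : ∀ (p : Module.Dual K H) (h : H),
      M (p ⊗ₜ[K] h) ((Coalgebra.counit : Module.Dual K H) ⊗ₜ[K] (1 : H)) = p ⊗ₜ[K] h := by
    intro p h
    rw [hM, DCPAux.dprod_counit_right _ _ _ hαe hβSe, mul_one]
  refine ⟨?_, ?_, ?_, ?_, ?_, ?_⟩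
  · intro x y z
    induction x using TensorProduct.induction_on with
    | zero => simp
    | add x1 x2 ih1 ih2 => simp only [map_add, LinearMap.add_apply, ih1, ih2]
    | tmul p h =>
      induction y using TensorProduct.induction_on with
      | zero => simp
      | add y1 y2 ih1 ih2 => simp only [map_add, LinearMap.add_apply, ih1, ih2]
      | tmul q l =>
        induction z using TensorProduct.induction_on with
        | zero => simp
        | add z1 z2 ih1 ih2 => simp only [map_add, ih1, ih2]
        | tmul r m => exact assoc_pure p h q l r m
  · intro x
    constructor
    · induction x using TensorProduct.induction_on with
      | zero => simp
      | tmul q l => exact unitl_pure q l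
      | add a b ha hb => simp only [map_add, ha, hb]
    · induction x using TensorProduct.induction_on with
      | zero => simp
      | tmul p h => exact unitr_pure p h
      | add a b ha hb => simp only [map_add, LinearMap.add_apply, ha, hb]
  · intro p p'
    rw [hM, DCPAux.dprod_one_left _ _ _ hα1 hβ1 hS1']
  · intro a b hab
    have key : ∀ p : Module.Dual K H,
        (TensorProduct.rid K (Module.Dual K H))
          ((LinearMap.lTensor (Module.Dual K H) (Coalgebra.counit (R := K)))
            (DCP.toD1 K p)) = p := by
      intro p
      simp [DCP.toD1, Bialgebra.counit_one]
    have h2 := congrArg (fun t => (TensorProduct.rid K (Module.Dual K H))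
      ((LinearMap.lTensor (Module.Dual K H) (Coalgebra.counit (R := K))) t)) hab
    simp only [key] at h2
    exact h2
  · intro h l
    have e2 : ∀ z : H, DCP.toD2 K (H := H) z
        = (Coalgebra.counit : Module.Dual K H) ⊗ₜ[K] z := fun z => rfl
    rw [e2, e2, e2, hM, DCPAux.dprod_counit_right _ _ _ hαe hβSe]
  · intro a b hab
    have key : ∀ h : H,
        (TensorProduct.lid K H)
          ((LinearMap.rTensor H (LinearMap.applyₗ (R := K) (1 : H)))
            (DCP.toD2 K h)) = h := by
      intro h
      simp [DCP.toD2, Bialgebra.counit_one]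
    have h2 := congrArg (fun t => (TensorProduct.lid K H)
      ((LinearMap.rTensor H (LinearMap.applyₗ (R := K) (1 : H))) t)) hab
    simp only [key] at h2
    exact h2
end
end

section
/- Let H be a finite dimensional Hopf algebra. In the diagonal crossed product H* ⋈ H_(α,β), the following commutation rule holds: Σ ⟨p₁, h₂⟩ (ε ⋈ β⁻¹(h₁)) (p₂ ⋈ 1) = Σ ⟨p₂, αβ⁻¹(h₁)⟩ (p₁ ⋈ β⁻¹(h₂)) for all p ∈ H* and h ∈ H. -/
open TensorProduct LinearMap

noncomputable section

namespace ConvAux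
variable {K H : Type} [Field K] [Ring H] [HopfAlgebra K H]

def conv {C : Type} [AddCommGroup C] [Module K C] [CoalgebraStruct K C]
    (f g : C →ₗ[K] H) : C →ₗ[K] H :=
  LinearMap.mul' K H ∘ₗ TensorProduct.map f g ∘ₗ Coalgebra.comul

def cunit (C : Type) [AddCommGroup C] [Module K C] [CoalgebraStruct K C] : C →ₗ[K] H :=
  Algebra.linearMap K H ∘ₗ (Coalgebra.counit : C →ₗ[K] K)

def nu : H ⊗[K] H →ₗ[K] H :=
  HopfAlgebra.antipode (R := K) ∘ₗ LinearMap.mul' K H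

def rho : H ⊗[K] H →ₗ[K] H :=
  LinearMap.mul' K H ∘ₗ
    TensorProduct.map (HopfAlgebra.antipode (R := K)) (HopfAlgebra.antipode (R := K)) ∘ₗ
    (TensorProduct.comm K H H).toLinearMap

lemma comul_tmul_repr (a b : H) (ra : Coalgebra.Repr K a (H × H)) (rb : Coalgebra.Repr K b (H × H)) :
    Coalgebra.comul (R := K) (a ⊗ₜ[K] b) =
      ∑ i ∈ ra.index, ∑ j ∈ rb.index,
        (ra.left i ⊗ₜ[K] rb.left j) ⊗ₜ[K] (ra.right i ⊗ₜ[K] rb.right j) := by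
  have h0 : Coalgebra.comul (R := K) (a ⊗ₜ[K] b) =
      TensorProduct.tensorTensorTensorComm K H H H H
        (Coalgebra.comul (R := K) a ⊗ₜ Coalgebra.comul (R := K) b) := rfl
  rw [h0, ← ra.eq, ← rb.eq]
  simp only [TensorProduct.sum_tmul, TensorProduct.tmul_sum, map_sum,
    TensorProduct.tensorTensorTensorComm_tmul]
  rw [Finset.sum_comm]

lemma comul_mul_repr (a b : H) (ra : Coalgebra.Repr K a (H × H)) (rb : Coalgebra.Repr K b (H × H)) :
    Coalgebra.comul (R := K) (a * b) =
      ∑ i ∈ ra.index, ∑ j ∈ rb.index,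
        (ra.left i * rb.left j) ⊗ₜ[K] (ra.right i * rb.right j) := by
  rw [Bialgebra.comul_mul, ← ra.eq, ← rb.eq, Finset.sum_mul_sum]
  simp [Algebra.TensorProduct.tmul_mul_tmul]

lemma counit_tmul (a b : H) :
    Coalgebra.counit (R := K) (a ⊗ₜ[K] b)
      = Coalgebra.counit (R := K) a * Coalgebra.counit (R := K) b := by
  show Coalgebra.counit (R := K) b • Coalgebra.counit (R := K) a = _
  rw [smul_eq_mul, mul_comm]

lemma P1 : conv (nu (K := K) (H := H)) (LinearMap.mul' K H) = cunit (H ⊗[K] H) := by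
  apply TensorProduct.ext'; intro a b
  have ra := Coalgebra.Repr.arbitrary K a
  have rb := Coalgebra.Repr.arbitrary K b
  have e1 := HopfAlgebra.mul_antipode_rTensor_comul_apply (R := K) (a * b)
  rw [comul_mul_repr a b ra rb] at e1
  simp only [map_sum, LinearMap.rTensor_tmul, LinearMap.mul'_apply] at e1
  have : conv (nu (K := K) (H := H)) (LinearMap.mul' K H) (a ⊗ₜ[K] b)
      = ∑ i ∈ ra.index, ∑ j ∈ rb.index,
          HopfAlgebra.antipode (R := K) (ra.left i * rb.left j) *
            (ra.right i * rb.right j) := by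
    simp only [conv, LinearMap.comp_apply, comul_tmul_repr a b ra rb, map_sum,
      TensorProduct.map_tmul, LinearMap.mul'_apply, nu]
  rw [this, e1]
  simp [cunit, counit_tmul, Bialgebra.counit_mul]
  exact Algebra.commutes _ _

lemma P2 : conv (LinearMap.mul' K H) (rho (K := K) (H := H)) = cunit (H ⊗[K] H) := by
  apply TensorProduct.ext'; intro a b
  have ra := Coalgebra.Repr.arbitrary K a
  have rb := Coalgebra.Repr.arbitrary K b
  have hb := HopfAlgebra.sum_mul_antipode_eq_algebraMap_counit (R := K) rb
  have ha := HopfAlgebra.sum_mul_antipode_eq_algebraMap_counit (R := K) ra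
  have : conv (LinearMap.mul' K H) (rho (K := K) (H := H)) (a ⊗ₜ[K] b)
      = ∑ i ∈ ra.index, ∑ j ∈ rb.index,
          (ra.left i * rb.left j) *
            (HopfAlgebra.antipode (R := K) (rb.right j) *
              HopfAlgebra.antipode (R := K) (ra.right i)) := by
    simp only [conv, LinearMap.comp_apply, comul_tmul_repr a b ra rb, map_sum,
      TensorProduct.map_tmul, LinearMap.mul'_apply, rho, LinearEquiv.coe_coe,
      TensorProduct.comm_tmul]
  rw [this]
  calc ∑ i ∈ ra.index, ∑ j ∈ rb.index,
        (ra.left i * rb.left j) * (HopfAlgebra.antipode (R := K) (rb.right j) *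
          HopfAlgebra.antipode (R := K) (ra.right i))
      = ∑ i ∈ ra.index, ra.left i *
          ((∑ j ∈ rb.index, rb.left j * HopfAlgebra.antipode (R := K) (rb.right j)) *
            HopfAlgebra.antipode (R := K) (ra.right i)) := by
        apply Finset.sum_congr rfl; intro i _
        rw [Finset.sum_mul, Finset.mul_sum]
        apply Finset.sum_congr rfl; intro j _
        noncomm_ring
    _ = ∑ i ∈ ra.index, Coalgebra.counit (R := K) b •
          (ra.left i * HopfAlgebra.antipode (R := K) (ra.right i)) := by
        apply Finset.sum_congr rfl; intro i _
        rw [hb, Algebra.smul_def, ← mul_assoc,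
          ← Algebra.commutes (Coalgebra.counit (R := K) b) (ra.left i), mul_assoc]
    _ = cunit (H ⊗[K] H) (a ⊗ₜ[K] b) := by
        rw [← Finset.smul_sum, ha]
        simp [cunit, counit_tmul, Algebra.smul_def, ← map_mul,
          mul_comm (Coalgebra.counit (R := K) b)]

end ConvAux

namespace More
open ConvAux
variable {K H : Type} [Field K] [Ring H] [HopfAlgebra K H]

lemma conv_repr {C : Type} [AddCommGroup C] [Module K C] [Coalgebra K C]
    (f g : C →ₗ[K] H) (x : C) (r : Coalgebra.Repr K x (C × C)) :
    conv f g x = ∑ i ∈ r.index, f (r.left i) * g (r.right i) := by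
  simp only [conv, LinearMap.comp_apply, ← r.eq, map_sum, TensorProduct.map_tmul,
    LinearMap.mul'_apply]

lemma conv_cunit_left {C : Type} [AddCommGroup C] [Module K C] [Coalgebra K C]
    (f : C →ₗ[K] H) : conv (cunit C) f = f := by
  apply LinearMap.ext; intro x
  have r := Coalgebra.Repr.arbitrary K x
  have h1 := Coalgebra.sum_counit_tmul_map_eq (R := K) f x (repr := r)
  have h2 := congrArg (TensorProduct.lid K H) h1
  simp only [map_sum, TensorProduct.lid_tmul, one_smul] at h2
  rw [conv_repr _ _ _ r]
  calc ∑ i ∈ r.index, cunit C (r.left i) * f (r.right i)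
      = ∑ i ∈ r.index, Coalgebra.counit (R := K) (r.left i) • f (r.right i) := by
        apply Finset.sum_congr rfl; intro i _
        simp [cunit, Algebra.smul_def]
    _ = f x := h2

lemma conv_cunit_right {C : Type} [AddCommGroup C] [Module K C] [Coalgebra K C]
    (f : C →ₗ[K] H) : conv f (cunit C) = f := by
  apply LinearMap.ext; intro x
  have r := Coalgebra.Repr.arbitrary K x
  have h1 := Coalgebra.sum_map_tmul_counit_eq (R := K) f x (repr := r)
  have h2 := congrArg (TensorProduct.rid K H) h1
  simp only [map_sum, TensorProduct.rid_tmul, one_smul] at h2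
  rw [conv_repr _ _ _ r]
  calc ∑ i ∈ r.index, f (r.left i) * cunit C (r.right i)
      = ∑ i ∈ r.index, Coalgebra.counit (R := K) (r.right i) • f (r.left i) := by
        apply Finset.sum_congr rfl; intro i _
        simp [cunit, Algebra.smul_def, Algebra.commutes]
    _ = f x := h2

lemma conv_assoc {C : Type} [AddCommGroup C] [Module K C] [Coalgebra K C]
    (f g k : C →ₗ[K] H) : conv (conv f g) k = conv f (conv g k) := by
  apply LinearMap.ext; intro x
  have r := Coalgebra.Repr.arbitrary K x
  have r1 : ∀ i : C × C, Coalgebra.Repr K (r.left i) (C × C) := fun i => Coalgebra.Repr.arbitrary K _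
  have r2 : ∀ i : C × C, Coalgebra.Repr K (r.right i) (C × C) := fun i => Coalgebra.Repr.arbitrary K _
  have key := Coalgebra.sum_tmul_tmul_eq (R := K) r r1 r2
  have key2 := congrArg (LinearMap.mul' K H ∘ₗ
    TensorProduct.map f (LinearMap.mul' K H ∘ₗ TensorProduct.map g k)) key
  simp only [map_sum, LinearMap.comp_apply, TensorProduct.map_tmul,
    LinearMap.mul'_apply] at key2
  rw [conv_repr _ _ _ r, conv_repr _ _ _ r]
  calc ∑ i ∈ r.index, conv f g (r.left i) * k (r.right i)
      = ∑ i ∈ r.index, ∑ j ∈ (r1 i).index,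
          f ((r1 i).left j) * (g ((r1 i).right j) * k (r.right i)) := by
        apply Finset.sum_congr rfl; intro i _
        rw [conv_repr _ _ _ (r1 i), Finset.sum_mul]
        exact Finset.sum_congr rfl fun j _ => mul_assoc _ _ _
    _ = ∑ i ∈ r.index, ∑ j ∈ (r2 i).index,
          f (r.left i) * (g ((r2 i).left j) * k ((r2 i).right j)) := key2
    _ = ∑ i ∈ r.index, f (r.left i) * conv g k (r.right i) := by
        apply Finset.sum_congr rfl; intro i _
        rw [conv_repr _ _ _ (r2 i), Finset.mul_sum]

lemma antipode_mul (a b : H) :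
    HopfAlgebra.antipode (R := K) (a * b)
      = HopfAlgebra.antipode (R := K) b * HopfAlgebra.antipode (R := K) a := by
  have chain : nu (K := K) (H := H) = rho := by
    calc nu (K := K) (H := H)
        = conv nu (cunit (H ⊗[K] H)) := (conv_cunit_right _).symm
      _ = conv nu (conv (LinearMap.mul' K H) rho) := by rw [P2]
      _ = conv (conv nu (LinearMap.mul' K H)) rho := (conv_assoc _ _ _).symm
      _ = conv (cunit (H ⊗[K] H)) rho := by rw [P1]
      _ = rho := conv_cunit_left _
  have := congrArg (fun f : H ⊗[K] H →ₗ[K] H => f (a ⊗ₜ[K] b)) chain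
  simpa [nu, rho] using this

lemma antipode_one : HopfAlgebra.antipode (R := K) (A := H) 1 = 1 := by
  have := HopfAlgebra.mul_antipode_rTensor_comul_apply (R := K) (A := H) 1
  simpa [Algebra.TensorProduct.one_def] using this

lemma key_lemma (Sinv : H →ₗ[K] H)
    (hS1 : Sinv ∘ₗ HopfAlgebra.antipode (R := K) (A := H) = LinearMap.id)
    (hS2 : HopfAlgebra.antipode (R := K) (A := H) ∘ₗ Sinv = LinearMap.id) :
    LinearMap.mul' K H ∘ₗ LinearMap.lTensor H Sinv ∘ₗ (TensorProduct.comm K H H).toLinearMap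
        ∘ₗ (Coalgebra.comul : H →ₗ[K] H ⊗[K] H)
      = Algebra.linearMap K H ∘ₗ Coalgebra.counit := by
  have hinj : Function.Injective (HopfAlgebra.antipode (R := K) (A := H)) := by
    intro u v huv
    have h1 := LinearMap.congr_fun hS1 u
    have h2 := LinearMap.congr_fun hS1 v
    simp only [LinearMap.comp_apply, LinearMap.id_apply] at h1 h2
    rw [← h1, ← h2, huv]
  apply LinearMap.ext; intro x
  have r := Coalgebra.Repr.arbitrary K x
  have hL : (LinearMap.mul' K H ∘ₗ LinearMap.lTensor H Sinv
      ∘ₗ (TensorProduct.comm K H H).toLinearMap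
      ∘ₗ (Coalgebra.comul : H →ₗ[K] H ⊗[K] H)) x
      = ∑ i ∈ r.index, r.right i * Sinv (r.left i) := by
    simp only [LinearMap.comp_apply, ← r.eq, map_sum, TensorProduct.comm_tmul,
      LinearMap.lTensor_tmul, LinearMap.mul'_apply, LinearEquiv.coe_coe]
  rw [hL]
  apply hinj
  rw [map_sum]
  calc ∑ i ∈ r.index, HopfAlgebra.antipode (R := K) (r.right i * Sinv (r.left i))
      = ∑ i ∈ r.index, r.left i * HopfAlgebra.antipode (R := K) (r.right i) := by
        apply Finset.sum_congr rfl; intro i _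
        rw [antipode_mul]
        congr 1
        exact LinearMap.congr_fun hS2 (r.left i)
    _ = algebraMap K H (Coalgebra.counit (R := K) x) := HopfAlgebra.sum_mul_antipode_eq_algebraMap_counit r
    _ = HopfAlgebra.antipode (R := K)
          ((Algebra.linearMap K H ∘ₗ (Coalgebra.counit : H →ₗ[K] K)) x) := by
        simp [Algebra.algebraMap_eq_smul_one, map_smul, antipode_one]

end More



section MainAux
open DCP
variable {K H : Type} [Field K] [Ring H] [HopfAlgebra K H]

@[simp] lemma lift3_tmul {W : Type} [AddCommMonoid W] [Module K W]
    (Φ : H →ₗ[K] H →ₗ[K] H →ₗ[K] W) (a b c : H) :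
    DCP.lift3 K Φ (a ⊗ₜ[K] (b ⊗ₜ[K] c)) = Φ a b c := rfl

@[simp] lemma coreTri_apply (u v : H →ₗ[K] H) (F : Module.Dual K H →ₗ[K] Module.Dual K H)
    (g : H →ₗ[K] H) (p : Module.Dual K H) (k₁ k₂ k₃ : H) :
    DCP.coreTri K u v F g p k₁ k₂ k₃
      = F (p ∘ₗ LinearMap.mulLeft K (u k₃) ∘ₗ LinearMap.mulRight K (v k₁)) ⊗ₜ[K] g k₂ := rfl

lemma convMul_counit :
    DCP.convMul K (Coalgebra.counit : Module.Dual K H) = LinearMap.id := by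
  apply LinearMap.ext; intro q
  apply LinearMap.ext; intro x
  rw [LinearMap.id_apply]
  rw [DCP.convMul_apply]
  have h := Coalgebra.rTensor_counit_comul (R := K) x
  have hmap : TensorProduct.map (Coalgebra.counit : H →ₗ[K] K) q
      = (q.lTensor K) ∘ₗ ((Coalgebra.counit : H →ₗ[K] K).rTensor H) :=
    by simp
  rw [hmap, LinearMap.comp_apply, h]
  simp

/-- the bilinear map `a ↦ z ↦ p ∘ mulLeft z ∘ mulRight (α a)` -/
noncomputable def chi (α : H ≃ₗ[K] H) (p : Module.Dual K H) :
    H →ₗ[K] H →ₗ[K] Module.Dual K H :=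
  ((((LinearMap.llcomp K H H H) ∘ₗ LinearMap.mul K H).compl₂
      ((LinearMap.mul K H).flip ∘ₗ α.toLinearMap)).compr₂
    (LinearMap.llcomp K H H K p)).flip

@[simp] lemma chi_apply (α : H ≃ₗ[K] H) (p : Module.Dual K H) (a z x : H) :
    chi α p a z x = p (z * (x * α a)) := rfl

noncomputable def muP (Sinv : H →ₗ[K] H) : H ⊗[K] H →ₗ[K] H :=
  LinearMap.mul' K H ∘ₗ LinearMap.lTensor H Sinv ∘ₗ (TensorProduct.comm K H H).toLinearMap

@[simp] lemma muP_tmul (Sinv : H →ₗ[K] H) (c d : H) :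
    muP Sinv (c ⊗ₜ[K] d) = d * Sinv c := rfl

noncomputable def phiHat (α β : H ≃ₗ[K] H) (Sinv : H →ₗ[K] H) (p : Module.Dual K H) :
    H ⊗[K] (H ⊗[K] H) →ₗ[K] Module.Dual K H :=
  TensorProduct.lift ((chi α p).compl₂ (muP (Sinv ∘ₗ β.toLinearMap)))

noncomputable def Theta (α β : H ≃ₗ[K] H) (Sinv : H →ₗ[K] H) (p : Module.Dual K H) :
    (H ⊗[K] (H ⊗[K] H)) ⊗[K] H →ₗ[K] Module.Dual K H ⊗[K] H :=
  (TensorProduct.comm K H (Module.Dual K H)).toLinearMap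
    ∘ₗ LinearMap.lTensor H (phiHat α β Sinv p)
    ∘ₗ (TensorProduct.leftComm K H H (H ⊗[K] H)).toLinearMap
    ∘ₗ LinearMap.lTensor H (TensorProduct.assoc K H H H).toLinearMap
    ∘ₗ (TensorProduct.assoc K H (H ⊗[K] H) H).toLinearMap

@[simp] lemma Theta_tmul (α β : H ≃ₗ[K] H) (Sinv : H →ₗ[K] H) (p : Module.Dual K H)
    (k₁ k₂ k₃ y : H) :
    Theta α β Sinv p ((k₁ ⊗ₜ[K] (k₂ ⊗ₜ[K] k₃)) ⊗ₜ[K] y)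
      = chi α p k₁ (y * Sinv (β k₃)) ⊗ₜ[K] k₂ := by
  simp [Theta, phiHat, muP]

end MainAux

section MainSteps
open DCP
variable {K H : Type} [Field K] [Ring H] [HopfAlgebra K H]

noncomputable def GammaP (α β : H ≃ₗ[K] H) (p : Module.Dual K H) :
    H ⊗[K] (H ⊗[K] H) →ₗ[K] Module.Dual K H ⊗[K] H :=
  DCP.lift3 K (DCP.coreTri K LinearMap.id (α.toLinearMap ∘ₗ β.symm.toLinearMap)
    LinearMap.id β.symm.toLinearMap p)

lemma step1 (α β : H ≃ₗ[K] H) (Sinv : H →ₗ[K] H) (p : Module.Dual K H)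
    (M : Module.Dual K H ⊗[K] H →ₗ[K] Module.Dual K H ⊗[K] H →ₗ[K] Module.Dual K H ⊗[K] H)
    (hM : ∀ (p : Module.Dual K H) (h : H) (q : Module.Dual K H) (l : H),
      M (p ⊗ₜ[K] h) (q ⊗ₜ[K] l) = DCP.dprod K (α.toLinearMap) (β.toLinearMap) Sinv p h q l) :
    TensorProduct.lift (M.compl₁₂ (DCP.toD2 K ∘ₗ β.symm.toLinearMap)
        (DCP.toD1 K ∘ₗ LinearMap.llcomp K H H K p ∘ₗ LinearMap.mul K H))
      = Theta α β Sinv p ∘ₗ LinearMap.rTensor H (DCP.comul2 K ∘ₗ β.symm.toLinearMap) := by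
  apply TensorProduct.ext'; intro x y
  have hL : TensorProduct.lift (M.compl₁₂ (DCP.toD2 K ∘ₗ β.symm.toLinearMap)
        (DCP.toD1 K ∘ₗ LinearMap.llcomp K H H K p ∘ₗ LinearMap.mul K H)) (x ⊗ₜ[K] y)
      = M ((Coalgebra.counit : H →ₗ[K] K) ⊗ₜ[K] β.symm x)
          ((LinearMap.llcomp K H H K p (LinearMap.mul K H y)) ⊗ₜ[K] (1 : H)) := by
    simp [DCP.toD1, DCP.toD2]
  rw [hL, hM]
  have hR : (Theta α β Sinv p ∘ₗ LinearMap.rTensor H (DCP.comul2 K ∘ₗ β.symm.toLinearMap))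
        (x ⊗ₜ[K] y)
      = Theta α β Sinv p (DCP.comul2 K (β.symm x) ⊗ₜ[K] y) := by
    simp
  rw [hR]
  have hmaps : DCP.lift3 K (DCP.coreTri K (Sinv ∘ₗ β.toLinearMap) α.toLinearMap
        (DCP.convMul K (Coalgebra.counit : Module.Dual K H))
        (LinearMap.mulRight K (1 : H)) (LinearMap.llcomp K H H K p (LinearMap.mul K H y)))
      = Theta α β Sinv p ∘ₗ (TensorProduct.mk K (H ⊗[K] (H ⊗[K] H)) H).flip y := by
    ext a b c
    simp only [TensorProduct.AlgebraTensorModule.curry_apply, TensorProduct.curry_apply,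
      LinearMap.coe_restrictScalars, LinearMap.comp_apply, lift3_tmul, coreTri_apply,
      TensorProduct.mk_apply, LinearMap.flip_apply, Theta_tmul, LinearMap.mulRight_one,
      convMul_counit, LinearMap.id_coe, id_eq]
    congr 1
    apply LinearMap.ext; intro w
    simp [mul_assoc]
  have : DCP.dprod K α.toLinearMap β.toLinearMap Sinv (Coalgebra.counit : Module.Dual K H)
        (β.symm x) (LinearMap.llcomp K H H K p (LinearMap.mul K H y)) 1
      = DCP.lift3 K (DCP.coreTri K (Sinv ∘ₗ β.toLinearMap) α.toLinearMap
          (DCP.convMul K (Coalgebra.counit : Module.Dual K H))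
          (LinearMap.mulRight K (1 : H)) (LinearMap.llcomp K H H K p (LinearMap.mul K H y)))
          (DCP.comul2 K (β.symm x)) := rfl
  rw [this, hmaps]
  simp

lemma comul_symm_apply (β : H ≃ₗ[K] H) (hβ : DCP.IsHopfAut K β) (b : H) :
    Coalgebra.comul (R := K) (β.symm b)
      = TensorProduct.map β.symm.toLinearMap β.symm.toLinearMap (Coalgebra.comul b) := by
  have cancel : ∀ t : H ⊗[K] H,
      TensorProduct.map β.symm.toLinearMap β.symm.toLinearMap
        (TensorProduct.map β.toLinearMap β.toLinearMap t) = t := by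
    intro t
    induction t using TensorProduct.induction_on with
    | zero => simp
    | tmul u v => simp
    | add u v hu hv => simp [hu, hv]
  have h := LinearMap.congr_fun hβ.2.2.1 (β.symm b)
  simp only [LinearMap.comp_apply, LinearEquiv.coe_coe, β.apply_symm_apply] at h
  rw [h, cancel]

lemma step2 (β : H ≃ₗ[K] H) (hβ : DCP.IsHopfAut K β) :
    DCP.comul2 K ∘ₗ β.symm.toLinearMap
      = TensorProduct.map β.symm.toLinearMap
          (TensorProduct.map β.symm.toLinearMap β.symm.toLinearMap) ∘ₗ DCP.comul2 K := by
  apply LinearMap.ext; intro x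
  have hpt : ∀ t : H ⊗[K] H,
      LinearMap.lTensor H (Coalgebra.comul (R := K))
          (TensorProduct.map β.symm.toLinearMap β.symm.toLinearMap t)
        = TensorProduct.map β.symm.toLinearMap
            (TensorProduct.map β.symm.toLinearMap β.symm.toLinearMap)
            (LinearMap.lTensor H (Coalgebra.comul (R := K)) t) := by
    intro t
    induction t using TensorProduct.induction_on with
    | zero => simp
    | tmul u v => simp [comul_symm_apply β hβ v]
    | add u v hu hv => simp [hu, hv]
  have h1 : DCP.comul2 K (β.symm x)
      = LinearMap.lTensor H (Coalgebra.comul (R := K)) (Coalgebra.comul (β.symm x)) := rfl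
  have h2 : DCP.comul2 K x
      = LinearMap.lTensor H (Coalgebra.comul (R := K)) (Coalgebra.comul x) := rfl
  simp only [LinearMap.comp_apply, LinearEquiv.coe_coe, h1, h2,
    comul_symm_apply β hβ x, hpt]

lemma nat1 :
    LinearMap.rTensor H (LinearMap.lTensor H (Coalgebra.comul (R := K) (A := H)))
        ∘ₗ (TensorProduct.assoc K H H H).symm.toLinearMap
      = (TensorProduct.assoc K H (H ⊗[K] H) H).symm.toLinearMap
        ∘ₗ LinearMap.lTensor H (LinearMap.rTensor H (Coalgebra.comul (R := K))) := by
  ext a b c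
  simp

lemma step3 :
    LinearMap.rTensor H (DCP.comul2 K) ∘ₗ (Coalgebra.comul : H →ₗ[K] H ⊗[K] H)
      = (TensorProduct.assoc K H (H ⊗[K] H) H).symm.toLinearMap
        ∘ₗ LinearMap.lTensor H (TensorProduct.assoc K H H H).symm.toLinearMap
        ∘ₗ LinearMap.lTensor H (LinearMap.lTensor H (Coalgebra.comul (R := K)))
        ∘ₗ LinearMap.lTensor H (Coalgebra.comul (R := K))
        ∘ₗ (Coalgebra.comul : H →ₗ[K] H ⊗[K] H) := by
  apply LinearMap.ext; intro x
  have hc2 : LinearMap.rTensor H (DCP.comul2 K) (Coalgebra.comul x)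
      = LinearMap.rTensor H (LinearMap.lTensor H (Coalgebra.comul (R := K)))
          (LinearMap.rTensor H (Coalgebra.comul (R := K)) (Coalgebra.comul x)) := by
    have hd : DCP.comul2 K (H := H)
        = LinearMap.lTensor H (Coalgebra.comul (R := K)) ∘ₗ Coalgebra.comul := rfl
    rw [hd, LinearMap.rTensor_comp]; rfl
  have e1 : LinearMap.rTensor H (Coalgebra.comul (R := K)) (Coalgebra.comul x)
      = (TensorProduct.assoc K H H H).symm
          (LinearMap.lTensor H (Coalgebra.comul (R := K)) (Coalgebra.comul x)) :=
    (Coalgebra.coassoc_symm_apply x).symm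
  have e2 := LinearMap.congr_fun (nat1 (K := K) (H := H))
    (LinearMap.lTensor H (Coalgebra.comul (R := K)) (Coalgebra.comul x))
  simp only [LinearMap.comp_apply, LinearEquiv.coe_coe] at e2
  have e3 : LinearMap.lTensor H (LinearMap.rTensor H (Coalgebra.comul (R := K)))
        (LinearMap.lTensor H (Coalgebra.comul (R := K)) (Coalgebra.comul x))
      = LinearMap.lTensor H (TensorProduct.assoc K H H H).symm.toLinearMap
          (LinearMap.lTensor H (LinearMap.lTensor H (Coalgebra.comul (R := K)))
            (LinearMap.lTensor H (Coalgebra.comul (R := K)) (Coalgebra.comul x))) := by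
    have hm : LinearMap.lTensor H (LinearMap.rTensor H (Coalgebra.comul (R := K)))
          ∘ₗ LinearMap.lTensor H (Coalgebra.comul (R := K))
        = LinearMap.lTensor H (TensorProduct.assoc K H H H).symm.toLinearMap
            ∘ₗ LinearMap.lTensor H (LinearMap.lTensor H (Coalgebra.comul (R := K)))
            ∘ₗ LinearMap.lTensor H (Coalgebra.comul (R := K)) := by
      simp only [← LinearMap.lTensor_comp]
      exact congrArg (LinearMap.lTensor H) Coalgebra.coassoc_symm.symm
    simpa only [LinearMap.comp_apply] using LinearMap.congr_fun hm (Coalgebra.comul x)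
  simp only [LinearMap.comp_apply, LinearEquiv.coe_coe, hc2, e1, e2, e3]

lemma step4 (α β : H ≃ₗ[K] H) (Sinv : H →ₗ[K] H) (p : Module.Dual K H) :
    Theta α β Sinv p
        ∘ₗ LinearMap.rTensor H (TensorProduct.map β.symm.toLinearMap
            (TensorProduct.map β.symm.toLinearMap β.symm.toLinearMap))
        ∘ₗ (TensorProduct.assoc K H (H ⊗[K] H) H).symm.toLinearMap
        ∘ₗ LinearMap.lTensor H (TensorProduct.assoc K H H H).symm.toLinearMap
      = GammaP α β p ∘ₗ LinearMap.lTensor H (LinearMap.lTensor H (muP Sinv)) := by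
  ext a b c d
  simp only [TensorProduct.AlgebraTensorModule.curry_apply, TensorProduct.curry_apply,
    LinearMap.coe_restrictScalars, LinearMap.comp_apply, LinearMap.lTensor_tmul,
    LinearEquiv.coe_coe, TensorProduct.assoc_symm_tmul, LinearMap.rTensor_tmul,
    TensorProduct.map_tmul, Theta_tmul, muP_tmul, GammaP, lift3_tmul, coreTri_apply,
    LinearEquiv.apply_symm_apply, LinearMap.id_coe, id_eq]
  congr 1

lemma step5 (Sinv : H →ₗ[K] H)
    (hkey : muP Sinv ∘ₗ (Coalgebra.comul : H →ₗ[K] H ⊗[K] H)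
      = Algebra.linearMap K H ∘ₗ Coalgebra.counit) (x : H) :
    LinearMap.lTensor H (LinearMap.lTensor H (muP Sinv))
        (LinearMap.lTensor H (LinearMap.lTensor H (Coalgebra.comul (R := K)))
          (LinearMap.lTensor H (Coalgebra.comul (R := K)) (Coalgebra.comul x)))
      = LinearMap.lTensor H ((TensorProduct.mk K H H).flip (1 : H)) (Coalgebra.comul x) := by
  have hflip : LinearMap.lTensor H (Algebra.linearMap K H ∘ₗ (Coalgebra.counit : H →ₗ[K] K))
        ∘ₗ (Coalgebra.comul : H →ₗ[K] H ⊗[K] H)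
      = (TensorProduct.mk K H H).flip (1 : H) := by
    rw [LinearMap.lTensor_comp, LinearMap.comp_assoc, Coalgebra.lTensor_counit_comp_comul]
    apply LinearMap.ext; intro z
    simp
  have h1 : LinearMap.lTensor H (LinearMap.lTensor H (muP Sinv))
        ∘ₗ LinearMap.lTensor H (LinearMap.lTensor H (Coalgebra.comul (R := K)))
      = LinearMap.lTensor H (LinearMap.lTensor H
          (Algebra.linearMap K H ∘ₗ (Coalgebra.counit : H →ₗ[K] K))) := by
    rw [← LinearMap.lTensor_comp, ← LinearMap.lTensor_comp, hkey]
  have h2 : LinearMap.lTensor H (LinearMap.lTensor H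
          (Algebra.linearMap K H ∘ₗ (Coalgebra.counit : H →ₗ[K] K)))
        ∘ₗ LinearMap.lTensor H (Coalgebra.comul (R := K))
      = LinearMap.lTensor H ((TensorProduct.mk K H H).flip (1 : H)) := by
    rw [← LinearMap.lTensor_comp]
    exact congrArg (LinearMap.lTensor H) hflip
  calc LinearMap.lTensor H (LinearMap.lTensor H (muP Sinv))
        (LinearMap.lTensor H (LinearMap.lTensor H (Coalgebra.comul (R := K)))
          (LinearMap.lTensor H (Coalgebra.comul (R := K)) (Coalgebra.comul x)))
      = (LinearMap.lTensor H (LinearMap.lTensor H (muP Sinv))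
          ∘ₗ LinearMap.lTensor H (LinearMap.lTensor H (Coalgebra.comul (R := K))))
          (LinearMap.lTensor H (Coalgebra.comul (R := K)) (Coalgebra.comul x)) := rfl
    _ = (LinearMap.lTensor H (LinearMap.lTensor H
          (Algebra.linearMap K H ∘ₗ (Coalgebra.counit : H →ₗ[K] K)))
          ∘ₗ LinearMap.lTensor H (Coalgebra.comul (R := K))) (Coalgebra.comul x) := by
        rw [h1]; rfl
    _ = LinearMap.lTensor H ((TensorProduct.mk K H H).flip (1 : H)) (Coalgebra.comul x) := by
        rw [h2]

lemma step6 (α β : H ≃ₗ[K] H) (p : Module.Dual K H) :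
    GammaP α β p ∘ₗ LinearMap.lTensor H ((TensorProduct.mk K H H).flip (1 : H))
      = TensorProduct.lift ((TensorProduct.mk K (Module.Dual K H) H).compl₁₂
          (LinearMap.llcomp K H H K p ∘ₗ (LinearMap.mul K H).flip ∘ₗ
            α.toLinearMap ∘ₗ β.symm.toLinearMap)
          β.symm.toLinearMap) := by
  apply TensorProduct.ext'; intro x y
  simp only [LinearMap.comp_apply, LinearMap.lTensor_tmul, LinearMap.flip_apply,
    TensorProduct.mk_apply, GammaP, lift3_tmul, coreTri_apply, TensorProduct.lift.tmul,
    LinearMap.compl₁₂_apply, LinearMap.mulLeft_one, LinearEquiv.coe_coe,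
    LinearMap.id_coe, id_eq]
  congr 1

end MainSteps

/-- The commutation rule
`Σ ⟨p₁, h₂⟩ (ε ⋈ β⁻¹(h₁)) (p₂ ⋈ 1) = Σ ⟨p₂, αβ⁻¹(h₁)⟩ (p₁ ⋈ β⁻¹(h₂))` in `H* ⋈ H_(α,β)`. -/
theorem stmt4 (K H : Type) [Field K] [Ring H] [HopfAlgebra K H] [FiniteDimensional K H]
    (Sinv : H →ₗ[K] H)
    (hS1 : Sinv ∘ₗ HopfAlgebra.antipode (R := K) (A := H) = LinearMap.id)
    (hS2 : HopfAlgebra.antipode (R := K) (A := H) ∘ₗ Sinv = LinearMap.id)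
    (α β : H ≃ₗ[K] H)
    (hα : DCP.IsHopfAut K α)
    (hβ : DCP.IsHopfAut K β)
    (M : Module.Dual K H ⊗[K] H →ₗ[K] Module.Dual K H ⊗[K] H →ₗ[K] Module.Dual K H ⊗[K] H)
    (hM : ∀ (p : Module.Dual K H) (h : H) (q : Module.Dual K H) (l : H),
      M (p ⊗ₜ[K] h) (q ⊗ₜ[K] l) = DCP.dprod K (α.toLinearMap) (β.toLinearMap) Sinv p h q l)
    :
    ∀ (p : Module.Dual K H) (h : H),
      TensorProduct.lift (M.compl₁₂ (DCP.toD2 K ∘ₗ β.symm.toLinearMap)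
          (DCP.toD1 K ∘ₗ LinearMap.llcomp K H H K p ∘ₗ LinearMap.mul K H))
        (Coalgebra.comul h)
      = TensorProduct.lift ((TensorProduct.mk K (Module.Dual K H) H).compl₁₂
          (LinearMap.llcomp K H H K p ∘ₗ (LinearMap.mul K H).flip ∘ₗ
            α.toLinearMap ∘ₗ β.symm.toLinearMap)
          β.symm.toLinearMap) (Coalgebra.comul h) := by
  intro p h
  have hkey : muP Sinv ∘ₗ (Coalgebra.comul : H →ₗ[K] H ⊗[K] H)
      = Algebra.linearMap K H ∘ₗ Coalgebra.counit := More.key_lemma Sinv hS1 hS2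
  have E1 := LinearMap.congr_fun (step1 α β Sinv p M hM) (Coalgebra.comul h)
  have E2 : LinearMap.rTensor H (DCP.comul2 K ∘ₗ β.symm.toLinearMap) (Coalgebra.comul h)
      = LinearMap.rTensor H (TensorProduct.map β.symm.toLinearMap
          (TensorProduct.map β.symm.toLinearMap β.symm.toLinearMap))
          (LinearMap.rTensor H (DCP.comul2 K) (Coalgebra.comul h)) := by
    rw [step2 β hβ, LinearMap.rTensor_comp]; rfl
  have E3 := LinearMap.congr_fun (step3 (K := K) (H := H)) h
  have E4 := LinearMap.congr_fun (step4 α β Sinv p)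
    (LinearMap.lTensor H (LinearMap.lTensor H (Coalgebra.comul (R := K)))
      (LinearMap.lTensor H (Coalgebra.comul (R := K)) (Coalgebra.comul h)))
  have E5 := step5 Sinv hkey h
  have E6 := LinearMap.congr_fun (step6 α β p) (Coalgebra.comul h)
  simp only [LinearMap.comp_apply, LinearEquiv.coe_coe] at E1 E3 E4 E6
  rw [E1, E2, E3, E4, E5, E6]
end
end

section
/- Let H be a finite dimensional Hopf algebra. The crossing maps respect the comultiplication: Δ_{(α,β)*(γ,δ)*(α,β)⁻¹, (α,β)*(μ,ν)*(α,β)⁻¹} ∘ ξ_(α,β)^{(γ,δ)*(μ,ν)} = (ξ_(α,β)^(γ,δ) ⊗ ξ_(α,β)^(μ,ν)) ∘ Δ_{(γ,δ),(μ,ν)}. -/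
open TensorProduct LinearMap

noncomputable section

namespace Aux

variable {K H : Type} [Field K] [Ring H] [HopfAlgebra K H]

-- naturality of dualDistrib
lemma dd_nat (t : H →ₗ[K] H) :
    (TensorProduct.dualDistrib K H H) ∘ₗ TensorProduct.map t.dualMap t.dualMap
      = (TensorProduct.map t t).dualMap ∘ₗ (TensorProduct.dualDistrib K H H) := by
  apply TensorProduct.ext'
  intro p q
  apply LinearMap.ext
  intro z
  induction z using TensorProduct.induction_on with
  | zero => simp
  | tmul x y => simp [TensorProduct.dualDistrib_apply]
  | add a b ha hb => simp_all [map_add]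

lemma dd_symm_nat [FiniteDimensional K H] (t : H →ₗ[K] H) :
    (TensorProduct.dualDistribEquiv K H H).symm.toLinearMap ∘ₗ (TensorProduct.map t t).dualMap
      = TensorProduct.map t.dualMap t.dualMap ∘ₗ
        (TensorProduct.dualDistribEquiv K H H).symm.toLinearMap := by
  have h : (TensorProduct.dualDistribEquiv K H H).toLinearMap
      = TensorProduct.dualDistrib K H H := rfl
  apply LinearMap.ext
  intro z
  apply (TensorProduct.dualDistribEquiv K H H).injective
  simp only [coe_comp, Function.comp_apply, LinearEquiv.coe_coe]
  rw [LinearEquiv.apply_symm_apply]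
  have hcoe : ∀ w : Module.Dual K H ⊗[K] Module.Dual K H,
      (TensorProduct.dualDistribEquiv K H H) w = TensorProduct.dualDistrib K H H w :=
    fun w => rfl
  rw [hcoe]
  have key : ∀ w : Module.Dual K H ⊗[K] Module.Dual K H,
      TensorProduct.dualDistrib K H H (TensorProduct.map t.dualMap t.dualMap w)
        = (TensorProduct.map t t).dualMap (TensorProduct.dualDistrib K H H w) := by
    intro w
    simpa using LinearMap.congr_fun (dd_nat t) w
  rw [key, ← hcoe, LinearEquiv.apply_symm_apply]

end Aux

namespace Aux

variable {K H : Type} [Field K] [Ring H] [HopfAlgebra K H]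

lemma mul_nat (t : H →ₗ[K] H) (ht : ∀ x y : H, t (x * y) = t x * t y) :
    (LinearMap.mul' K H) ∘ₗ TensorProduct.map t t = t ∘ₗ LinearMap.mul' K H := by
  apply TensorProduct.ext'
  intro x y
  simp [ht]

lemma dcomul_nat [FiniteDimensional K H] (t : H →ₗ[K] H)
    (ht : ∀ x y : H, t (x * y) = t x * t y) :
    DCP.dcomul K ∘ₗ t.dualMap
      = TensorProduct.map t.dualMap t.dualMap ∘ₗ DCP.dcomul K := by
  unfold DCP.dcomul
  rw [LinearMap.comp_assoc, LinearMap.dualMap_comp_dualMap, ← mul_nat t ht,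
    ← LinearMap.dualMap_comp_dualMap, ← LinearMap.comp_assoc, dd_symm_nat,
    LinearMap.comp_assoc]

lemma comm_nat (t : H →ₗ[K] H) :
    (TensorProduct.comm K (Module.Dual K H) (Module.Dual K H)).toLinearMap ∘ₗ
        TensorProduct.map t.dualMap t.dualMap
      = TensorProduct.map t.dualMap t.dualMap ∘ₗ
        (TensorProduct.comm K (Module.Dual K H) (Module.Dual K H)).toLinearMap := by
  apply TensorProduct.ext'
  intro p q
  simp

lemma ttt_nat {A B : Type} [AddCommGroup A] [Module K A] [AddCommGroup B] [Module K B]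
    (a b : A →ₗ[K] A) (c d : B →ₗ[K] B) :
    TensorProduct.map (TensorProduct.map a c) (TensorProduct.map b d) ∘ₗ
        (TensorProduct.tensorTensorTensorComm K A A B B).toLinearMap
      = (TensorProduct.tensorTensorTensorComm K A A B B).toLinearMap ∘ₗ
        TensorProduct.map (TensorProduct.map a b) (TensorProduct.map c d) := by
  apply TensorProduct.ext
  apply TensorProduct.ext'
  intro x y
  apply LinearMap.ext
  intro z
  induction z using TensorProduct.induction_on with
  | zero => simp
  | tmul u v => simp [TensorProduct.tensorTensorTensorComm_tmul]
  | add u v hu hv => simp_all [map_add]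

/-- comultiplicativity -/
def IsCH (f : H →ₗ[K] H) : Prop :=
  (Coalgebra.comul (R := K)) ∘ₗ f = TensorProduct.map f f ∘ₗ Coalgebra.comul

lemma isCH_comp {f g : H →ₗ[K] H} (hf : IsCH f) (hg : IsCH g) : IsCH (f ∘ₗ g) := by
  unfold IsCH at *
  rw [← LinearMap.comp_assoc, hf, LinearMap.comp_assoc, hg, ← LinearMap.comp_assoc,
    ← TensorProduct.map_comp]

lemma isCH_symm (f : H ≃ₗ[K] H) (hf : IsCH (K := K) f.toLinearMap) :
    IsCH (K := K) f.symm.toLinearMap := by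
  unfold IsCH at *
  have h2 : TensorProduct.map f.symm.toLinearMap f.symm.toLinearMap ∘ₗ
      TensorProduct.map f.toLinearMap f.toLinearMap = LinearMap.id := by
    rw [← TensorProduct.map_comp]
    simp [TensorProduct.map_id]
  calc Coalgebra.comul ∘ₗ f.symm.toLinearMap
      = (TensorProduct.map f.symm.toLinearMap f.symm.toLinearMap ∘ₗ
          TensorProduct.map f.toLinearMap f.toLinearMap) ∘ₗ
          Coalgebra.comul ∘ₗ f.symm.toLinearMap := by rw [h2]; simp
    _ = TensorProduct.map f.symm.toLinearMap f.symm.toLinearMap ∘ₗ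
          (Coalgebra.comul ∘ₗ f.toLinearMap) ∘ₗ f.symm.toLinearMap := by
          rw [hf]; simp [LinearMap.comp_assoc]
    _ = TensorProduct.map f.symm.toLinearMap f.symm.toLinearMap ∘ₗ Coalgebra.comul := by
          congr 1
          rw [LinearMap.comp_assoc]
          simp [LinearEquiv.comp_coe]

end Aux


/-- The crossing maps respect the comultiplication. -/
theorem stmt10 (K H : Type) [Field K] [Ring H] [HopfAlgebra K H] [FiniteDimensional K H]
    (Sinv : H →ₗ[K] H)
    (hS1 : Sinv ∘ₗ HopfAlgebra.antipode (R := K) (A := H) = LinearMap.id)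
    (hS2 : HopfAlgebra.antipode (R := K) (A := H) ∘ₗ Sinv = LinearMap.id)
    (α β γ δ μ ν : H ≃ₗ[K] H)
    (hα : DCP.IsHopfAut K α)
    (hβ : DCP.IsHopfAut K β)
    (hγ : DCP.IsHopfAut K γ)
    (hδ : DCP.IsHopfAut K δ)
    (hμ : DCP.IsHopfAut K μ)
    (hν : DCP.IsHopfAut K ν)
    :
    DCP.deltaComp K (α.toLinearMap ∘ₗ μ.toLinearMap ∘ₗ α.symm.toLinearMap)
        (α.toLinearMap ∘ₗ μ.symm.toLinearMap ∘ₗ β.symm.toLinearMap ∘ₗ δ.toLinearMap ∘ₗ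
          γ.symm.toLinearMap ∘ₗ β.toLinearMap ∘ₗ γ.toLinearMap ∘ₗ μ.toLinearMap ∘ₗ
          α.symm.toLinearMap) ∘ₗ
      DCP.xiMap K α β (μ.trans γ)
    = TensorProduct.map (DCP.xiMap K α β γ) (DCP.xiMap K α β μ) ∘ₗ
        DCP.deltaComp K μ.toLinearMap
          (μ.symm.toLinearMap ∘ₗ δ.toLinearMap ∘ₗ μ.toLinearMap) := by
  classical
  obtain ⟨hαm, -, hαc, -⟩ := hα
  obtain ⟨hβm, -, hβc, -⟩ := hβ
  obtain ⟨-, -, hγc, -⟩ := hγ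
  obtain ⟨-, -, hμc, -⟩ := hμ
  have ht : ∀ x y : H, (β.toLinearMap ∘ₗ α.symm.toLinearMap) (x * y)
      = (β.toLinearMap ∘ₗ α.symm.toLinearMap) x * (β.toLinearMap ∘ₗ α.symm.toLinearMap) y := by
    intro x y
    have hinv : α.symm (x * y) = α.symm x * α.symm y := by
      apply α.injective; rw [hαm]; simp
    simp [hinv, hβm]
  -- IsCH facts
  have cα : Aux.IsCH (K := K) α.toLinearMap := hαc
  have cβ : Aux.IsCH (K := K) β.toLinearMap := hβc
  have cγ : Aux.IsCH (K := K) γ.toLinearMap := hγc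
  have cμ : Aux.IsCH (K := K) μ.toLinearMap := hμc
  have cβs : Aux.IsCH (K := K) β.symm.toLinearMap := Aux.isCH_symm β cβ
  have ctr : Aux.IsCH (K := K) (μ.trans γ).toLinearMap := by
    have : (μ.trans γ).toLinearMap = γ.toLinearMap ∘ₗ μ.toLinearMap := rfl
    rw [this]; exact Aux.isCH_comp cγ cμ
  have ctrs : Aux.IsCH (K := K) (μ.trans γ).symm.toLinearMap := Aux.isCH_symm _ ctr
  have cf : Aux.IsCH (K := K) (α.toLinearMap ∘ₗ (μ.trans γ).symm.toLinearMap ∘ₗ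
      β.symm.toLinearMap ∘ₗ (μ.trans γ).toLinearMap) :=
    Aux.isCH_comp cα (Aux.isCH_comp ctrs (Aux.isCH_comp cβs ctr))
  unfold DCP.deltaComp DCP.xiMap
  conv_lhs => rw [LinearMap.comp_assoc, ← TensorProduct.map_comp]
  conv_rhs => rw [← LinearMap.comp_assoc, Aux.ttt_nat, LinearMap.comp_assoc,
    ← TensorProduct.map_comp]
  congr 1
  congr 1
  · -- dual part
    rw [LinearMap.comp_assoc, Aux.dcomul_nat _ ht, ← LinearMap.comp_assoc, Aux.comm_nat,
      LinearMap.comp_assoc]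
  · -- H part
    rw [LinearMap.comp_assoc, cf, ← LinearMap.comp_assoc, ← TensorProduct.map_comp]
    conv_rhs => rw [← LinearMap.comp_assoc, ← TensorProduct.map_comp]
    congr 1
    congr 1 <;> · apply LinearMap.ext; intro x; simp
end
end
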